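/- arXiv:1901.09393 — 8 statements merged into one kernel-verified Lean document; each statement's English description precedes it below -/
import Mathlib

section
/- Let X be a complex Banach space, L ∈ B(X), and M ∈ B(X) a contraction satisfying the spectral gap condition with constant δ < 1. Then there exists ε > 0 such that for all t ∈ [0,ε] the spectrum of M e^{tL} is contained in the union of the open disk of radius (1−δ)/2 centered at 1 and the open disk of radius (1+δ)/2 centered at 0; in particular spec(M e^{tL}) is disjoint from the circle Γ of radius (1−δ)/2 centered at 1 and from the circle γ of radius (1+δ)/2 centered at 0. -/
open Metric

/-- Upper semicontinuity of the spectrum: if the spectrum of `M` is contained in an open set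
`U`, then the spectrum of every nearby operator is also contained in `U`. -/
lemma spectrum_subset_of_norm_sub_lt
    {A : Type*} [NormedRing A] [NormedAlgebra ℂ A] [CompleteSpace A] [NormOneClass A]
    (M : A) (U : Set ℂ) (hU : IsOpen U) (hs : spectrum ℂ M ⊆ U) :
    ∃ c > (0 : ℝ), ∀ N : A, ‖N - M‖ < c → spectrum ℂ N ⊆ U := by
  set S : Set ℂ := Metric.closedBall (0 : ℂ) (‖M‖ + 1) \ U with hS
  have hScpt : IsCompact S := (isCompact_closedBall _ _).diff hU
  have hSres : ∀ z ∈ S, z ∈ resolventSet ℂ M := by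
    intro z hz
    have : z ∉ spectrum ℂ M := fun h => hz.2 (hs h)
    simpa [spectrum, Set.mem_compl_iff] using this
  have hcont : ContinuousOn (fun z => resolvent M z) S := fun z hz =>
    ((spectrum.hasDerivAt_resolvent (hSres z hz)).continuousAt).continuousWithinAt
  obtain ⟨C, hC⟩ := hScpt.exists_bound_of_continuousOn hcont
  set C' : ℝ := max C 0 + 1 with hC'
  have hC'pos : 0 < C' := by positivity
  have hC'bd : ∀ z ∈ S, ‖resolvent M z‖ ≤ C' := fun z hz =>
    (hC z hz).trans (by simp [hC']; linarith [le_max_left C 0])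
  refine ⟨min (1 / C') 1, by positivity, fun N hN z hzspec => ?_⟩
  by_contra hzU
  have hzS : z ∈ S := by
    refine ⟨?_, hzU⟩
    have h1 : ‖z‖ ≤ ‖N‖ := spectrum.norm_le_norm_of_mem hzspec
    have h2 : ‖N‖ ≤ ‖M‖ + ‖N - M‖ := by
      calc ‖N‖ = ‖M + (N - M)‖ := by congr 1; abel
        _ ≤ ‖M‖ + ‖N - M‖ := norm_add_le _ _
    have h3 : ‖N - M‖ < 1 := lt_of_lt_of_le hN (min_le_right _ _)
    simp only [Metric.mem_closedBall, dist_zero_right]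
    linarith
  have hu : IsUnit (algebraMap ℂ A z - M) := hSres z hzS
  set u := hu.unit with hudef
  have hinv : resolvent M z = ↑u⁻¹ := by
    rw [resolvent, ← hu.unit_spec, Ring.inverse_unit]
  have hbound : ‖(↑u⁻¹ : A) * (N - M)‖ < 1 := by
    calc ‖(↑u⁻¹ : A) * (N - M)‖ ≤ ‖(↑u⁻¹ : A)‖ * ‖N - M‖ := norm_mul_le _ _
      _ ≤ C' * ‖N - M‖ := by
          apply mul_le_mul_of_nonneg_right _ (norm_nonneg _)
          rw [← hinv]; exact hC'bd z hzS
      _ < C' * (1 / C') := by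
          apply mul_lt_mul_of_pos_left (lt_of_lt_of_le hN (min_le_left _ _)) hC'pos
      _ = 1 := by field_simp
  have hunit : IsUnit (algebraMap ℂ A z - N) := by
    have heq : algebraMap ℂ A z - N = ↑u * (1 - ↑u⁻¹ * (N - M)) := by
      rw [mul_sub, mul_one, ← mul_assoc, u.mul_inv, one_mul, hu.unit_spec]
      abel
    rw [heq]
    exact u.isUnit.mul (Units.oneSub _ hbound).isUnit
  exact spectrum.mem_iff.mp hzspec hunit

/-- **Spectral separation persists for small times.**
If `M` is a contraction on a complex Banach space satisfying the spectral gap condition with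
constant `δ < 1`, then there is `ε > 0` such that for all `t ∈ [0, ε]` the spectrum of
`M e^{tL}` is contained in the union of the open disk of radius `(1-δ)/2` centered at `1` and
the open disk of radius `(1+δ)/2` centered at `0`; in particular it is disjoint from the
circles `Γ` (radius `(1-δ)/2` about `1`) and `γ` (radius `(1+δ)/2` about `0`). -/
theorem spectrum_separation_small_times
    {X : Type*} [NormedAddCommGroup X] [NormedSpace ℂ X] [CompleteSpace X]
    (M L : X →L[ℂ] X)
    (hM : ‖M‖ ≤ 1)
    (δ : ℝ) (hδ : δ < 1)
    (h1 : (1 : ℂ) ∈ spectrum ℂ M)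
    (hspec : spectrum ℂ M ⊆ {1} ∪ Metric.closedBall (0 : ℂ) δ) :
    ∃ ε > (0 : ℝ), ∀ t ∈ Set.Icc (0 : ℝ) ε,
      spectrum ℂ (M * NormedSpace.exp (t • L)) ⊆
        Metric.ball (1 : ℂ) ((1 - δ) / 2) ∪ Metric.ball (0 : ℂ) ((1 + δ) / 2) ∧
      Disjoint (spectrum ℂ (M * NormedSpace.exp (t • L)))
        (Metric.sphere (1 : ℂ) ((1 - δ) / 2)) ∧
      Disjoint (spectrum ℂ (M * NormedSpace.exp (t • L)))
        (Metric.sphere (0 : ℂ) ((1 + δ) / 2)) := by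
  rcases subsingleton_or_nontrivial X with hX | hX
  · exact absurd h1 (spectrum.mem_iff.not.mpr (not_not_intro (isUnit_of_subsingleton _)))
  · set r1 : ℝ := (1 - δ) / 2 with hr1
    set r2 : ℝ := (1 + δ) / 2 with hr2
    set U : Set ℂ := Metric.ball (1 : ℂ) r1 ∪ Metric.ball (0 : ℂ) r2 with hU
    have hUopen : IsOpen U := (Metric.isOpen_ball).union Metric.isOpen_ball
    have hsub : spectrum ℂ M ⊆ U := by
      intro z hz
      rcases hspec hz with h | h
      · left
        simp only [Set.mem_singleton_iff] at h
        subst h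
        simp only [Metric.mem_ball, dist_self]
        linarith
      · right
        simp only [Metric.mem_closedBall, dist_zero_right] at h
        simp only [Metric.mem_ball, dist_zero_right]
        linarith
    obtain ⟨c, hc, hgood⟩ := spectrum_subset_of_norm_sub_lt M U hUopen hsub
    have hcont : Continuous (fun t : ℝ => M * NormedSpace.exp (t • L)) :=
      continuous_const.mul ((continuous_iff_continuousAt.mpr fun x => (NormedSpace.exp_analytic (𝕂 := ℂ) x).continuousAt).comp (continuous_id.smul continuous_const))
    have htend : Filter.Tendsto (fun t : ℝ => M * NormedSpace.exp (t • L)) (nhds 0)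
        (nhds M) := by
      have := hcont.tendsto 0
      simpa [NormedSpace.exp_zero] using this
    obtain ⟨ε', hε', hεball⟩ := Metric.tendsto_nhds_nhds.mp htend c hc
    refine ⟨ε' / 2, by linarith, fun t ht => ?_⟩
    have hdist : dist t (0 : ℝ) < ε' := by
      rw [Real.dist_eq, sub_zero, abs_of_nonneg ht.1]
      linarith [ht.2]
    have hnear : ‖M * NormedSpace.exp (t • L) - M‖ < c := by
      have := hεball hdist
      rwa [dist_eq_norm] at this
    have hsubU : spectrum ℂ (M * NormedSpace.exp (t • L)) ⊆ U := hgood _ hnear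
    have hdisj1 : Disjoint U (Metric.sphere (1 : ℂ) r1) := by
      rw [Set.disjoint_left]
      rintro x (hx | hx) hxs
      · rw [Metric.mem_sphere] at hxs
        rw [Metric.mem_ball] at hx
        linarith
      · rw [Metric.mem_sphere] at hxs
        rw [Metric.mem_ball] at hx
        have h10 : dist (1 : ℂ) (0 : ℂ) = 1 := by simp
        have := dist_triangle (1 : ℂ) x 0
        rw [h10, dist_comm (1 : ℂ) x, hxs] at this
        simp only [hr1, hr2] at *
        linarith
    have hdisj2 : Disjoint U (Metric.sphere (0 : ℂ) r2) := by
      rw [Set.disjoint_left]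
      rintro x (hx | hx) hxs
      · rw [Metric.mem_sphere] at hxs
        rw [Metric.mem_ball] at hx
        have h10 : dist (1 : ℂ) (0 : ℂ) = 1 := by simp
        have := dist_triangle (1 : ℂ) x 0
        rw [h10, dist_comm (1 : ℂ) x, hxs] at this
        simp only [hr1, hr2] at *
        linarith
      · rw [Metric.mem_sphere] at hxs
        rw [Metric.mem_ball] at hx
        linarith
    exact ⟨hsubU, (hdisj1.mono_left hsubU), (hdisj2.mono_left hsubU)⟩
end

section
/- (Chernoff's √n-Lemma) Let X be a Banach space, C ∈ B(X) a contraction (‖C‖ ≤ 1), and 𝟙 the identity operator on X. Then for all n ∈ ℕ, ‖C^n − e^{n(C−𝟙)}‖ ≤ √n · ‖C − 𝟙‖. -/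
open scoped Nat

lemma aux_sum_a (x : ℝ) : ∑' k : ℕ, x ^ k / k ! = Real.exp x := by
  rw [Real.exp_eq_exp_ℝ, NormedSpace.exp_eq_tsum_div]

lemma aux_term_f (x : ℝ) (k : ℕ) :
    ((k + 1 : ℕ) : ℝ) * (x ^ (k + 1) / (k + 1)!) = x * (x ^ k / k !) := by
  rw [Nat.factorial_succ]
  push_cast
  rw [pow_succ]
  have hk : ((k ! : ℕ) : ℝ) ≠ 0 := by positivity
  field_simp

lemma aux_summable_f (x : ℝ) : Summable (fun k : ℕ => (k : ℝ) * (x ^ k / k !)) := by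
  rw [← summable_nat_add_iff 1]
  simp only [aux_term_f]
  exact (Real.summable_pow_div_factorial x).mul_left x

lemma aux_sum_f (x : ℝ) : ∑' k : ℕ, (k : ℝ) * (x ^ k / k !) = x * Real.exp x := by
  rw [Summable.tsum_eq_zero_add (aux_summable_f x)]
  simp only [aux_term_f, Nat.cast_zero, zero_mul, zero_add]
  rw [tsum_mul_left, aux_sum_a]

lemma aux_term_g (x : ℝ) (k : ℕ) :
    ((k + 1 : ℕ) : ℝ) * (((k + 1 : ℕ) : ℝ) - 1) * (x ^ (k + 1) / (k + 1)!)
      = x * ((k : ℝ) * (x ^ k / k !)) := by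
  rw [Nat.factorial_succ]
  push_cast
  rw [pow_succ]
  have hk : ((k ! : ℕ) : ℝ) ≠ 0 := by positivity
  field_simp
  ring

lemma aux_summable_g (x : ℝ) :
    Summable (fun k : ℕ => (k : ℝ) * ((k : ℝ) - 1) * (x ^ k / k !)) := by
  rw [← summable_nat_add_iff 1]
  simp only [aux_term_g]
  exact (aux_summable_f x).mul_left x

lemma aux_sum_g (x : ℝ) :
    ∑' k : ℕ, (k : ℝ) * ((k : ℝ) - 1) * (x ^ k / k !) = x ^ 2 * Real.exp x := by
  have hsumm : Summable (fun k : ℕ => (k : ℝ) * ((k : ℝ) - 1) * (x ^ k / k !)) :=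
    aux_summable_g x
  rw [Summable.tsum_eq_zero_add hsumm]
  simp only [aux_term_g, Nat.cast_zero, zero_mul, zero_add]
  rw [tsum_mul_left, aux_sum_f]
  ring

lemma aux_summable_sq (x : ℝ) :
    Summable (fun k : ℕ => (x - (k : ℝ)) ^ 2 * (x ^ k / k !)) := by
  have h : (fun k : ℕ => (x - (k : ℝ)) ^ 2 * (x ^ k / k !))
      = fun k : ℕ => (x ^ 2 * (x ^ k / k !) - 2 * x * ((k : ℝ) * (x ^ k / k !)))
        + ((k : ℝ) * ((k : ℝ) - 1) * (x ^ k / k !) + (k : ℝ) * (x ^ k / k !)) := by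
    funext k; ring
  rw [h]
  exact (((Real.summable_pow_div_factorial x).mul_left _).sub
    ((aux_summable_f x).mul_left _)).add ((aux_summable_g x).add (aux_summable_f x))

lemma aux_sum_sq (x : ℝ) :
    ∑' k : ℕ, (x - (k : ℝ)) ^ 2 * (x ^ k / k !) = x * Real.exp x := by
  have h : (fun k : ℕ => (x - (k : ℝ)) ^ 2 * (x ^ k / k !))
      = fun k : ℕ => (x ^ 2 * (x ^ k / k !) - 2 * x * ((k : ℝ) * (x ^ k / k !)))
        + ((k : ℝ) * ((k : ℝ) - 1) * (x ^ k / k !) + (k : ℝ) * (x ^ k / k !)) := by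
    funext k; ring
  rw [h, Summable.tsum_add (((Real.summable_pow_div_factorial x).mul_left _).sub
      ((aux_summable_f x).mul_left _)) ((aux_summable_g x).add (aux_summable_f x)),
    Summable.tsum_sub ((Real.summable_pow_div_factorial x).mul_left _) ((aux_summable_f x).mul_left _),
    Summable.tsum_add (aux_summable_g x) (aux_summable_f x),
    tsum_mul_left, tsum_mul_left, aux_sum_a, aux_sum_f, aux_sum_g]
  ring

lemma aux_summable_abs (x : ℝ) (hx : 0 ≤ x) :
    Summable (fun k : ℕ => |x - (k : ℝ)| * (x ^ k / k !)) := by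
  refine Summable.of_nonneg_of_le (fun k => by positivity)
    (fun k => ?_) (((Real.summable_pow_div_factorial x).mul_left x).add (aux_summable_f x))
  have h1 : |x - (k : ℝ)| ≤ x + k := by
    rw [abs_le]; constructor <;> [nlinarith [Nat.cast_nonneg (α := ℝ) k]; nlinarith [Nat.cast_nonneg (α := ℝ) k]]
  have h2 : (0 : ℝ) ≤ x ^ k / k ! := by positivity
  calc |x - (k : ℝ)| * (x ^ k / k !) ≤ (x + k) * (x ^ k / k !) :=
        mul_le_mul_of_nonneg_right h1 h2
    _ = x * (x ^ k / k !) + (k : ℝ) * (x ^ k / k !) := by ring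

lemma aux_sum_abs_le (x : ℝ) (hx : 0 ≤ x) :
    ∑' k : ℕ, |x - (k : ℝ)| * (x ^ k / k !) ≤ Real.sqrt x * Real.exp x := by
  refine Summable.tsum_le_of_sum_le (aux_summable_abs x hx) (fun s => ?_)
  have key : ∑ k ∈ s, |x - (k : ℝ)| * (x ^ k / k !)
      = ∑ k ∈ s, Real.sqrt (x ^ k / k !) * (|x - (k : ℝ)| * Real.sqrt (x ^ k / k !)) := by
    refine Finset.sum_congr rfl (fun k _ => ?_)
    have h2 : (0 : ℝ) ≤ x ^ k / k ! := by positivity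
    rw [show Real.sqrt (x ^ k / k !) * (|x - (k : ℝ)| * Real.sqrt (x ^ k / k !))
        = |x - (k : ℝ)| * (Real.sqrt (x ^ k / k !) * Real.sqrt (x ^ k / k !)) by ring,
      Real.mul_self_sqrt h2]
  rw [key]
  have cs := Real.sum_mul_le_sqrt_mul_sqrt s (fun k => Real.sqrt (x ^ k / k !))
    (fun k => |x - (k : ℝ)| * Real.sqrt (x ^ k / k !))
  refine cs.trans ?_
  have e1 : ∑ k ∈ s, Real.sqrt (x ^ k / k !) ^ 2 = ∑ k ∈ s, x ^ k / k ! := by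
    refine Finset.sum_congr rfl (fun k _ => Real.sq_sqrt (by positivity))
  have e2 : ∑ k ∈ s, (|x - (k : ℝ)| * Real.sqrt (x ^ k / k !)) ^ 2
      = ∑ k ∈ s, (x - (k : ℝ)) ^ 2 * (x ^ k / k !) := by
    refine Finset.sum_congr rfl (fun k _ => ?_)
    rw [mul_pow, Real.sq_sqrt (by positivity), sq_abs]
  rw [e1, e2]
  have b1 : ∑ k ∈ s, x ^ k / k ! ≤ Real.exp x := by
    rw [← aux_sum_a x]
    exact Summable.sum_le_tsum s (fun k _ => by positivity) (Real.summable_pow_div_factorial x)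
  have b2 : ∑ k ∈ s, (x - (k : ℝ)) ^ 2 * (x ^ k / k !) ≤ x * Real.exp x := by
    rw [← aux_sum_sq x]
    exact Summable.sum_le_tsum s (fun k _ => by positivity) (aux_summable_sq x)
  have hnn1 : (0:ℝ) ≤ ∑ k ∈ s, x ^ k / k ! := Finset.sum_nonneg fun k _ => by positivity
  have hnn2 : (0:ℝ) ≤ ∑ k ∈ s, (x - (k : ℝ)) ^ 2 * (x ^ k / k !) :=
    Finset.sum_nonneg fun k _ => by positivity
  calc Real.sqrt (∑ k ∈ s, x ^ k / k !) * Real.sqrt (∑ k ∈ s, (x - (k:ℝ)) ^ 2 * (x ^ k / k !))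
      ≤ Real.sqrt (Real.exp x) * Real.sqrt (x * Real.exp x) :=
        mul_le_mul (Real.sqrt_le_sqrt b1) (Real.sqrt_le_sqrt b2) (Real.sqrt_nonneg _)
          (Real.sqrt_nonneg _)
    _ = Real.sqrt x * Real.exp x := by
        rw [← Real.sqrt_mul (Real.exp_pos x).le, show Real.exp x * (x * Real.exp x)
          = x * Real.exp x ^ 2 by ring, Real.sqrt_mul hx,
          Real.sqrt_sq (Real.exp_pos x).le]

section Op

variable {X : Type*} [NormedAddCommGroup X] [NormedSpace ℝ X] [CompleteSpace X]

omit [CompleteSpace X] in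
lemma aux_pow_sub_one (C : X →L[ℝ] X) (hC : ‖C‖ ≤ 1) (m : ℕ) :
    ‖C ^ m - 1‖ ≤ (m : ℝ) * ‖C - 1‖ := by
  induction m with
  | zero => simp
  | succ m ih =>
    have key : C ^ (m + 1) - 1 = C ^ m * (C - 1) + (C ^ m - 1) := by
      rw [mul_sub, mul_one, pow_succ]; abel
    have hCm : ‖C ^ m‖ ≤ 1 := by
      cases m with
      | zero => rw [pow_zero]; exact ContinuousLinearMap.norm_id_le
      | succ m => exact (norm_pow_le' C m.succ_pos).trans (pow_le_one₀ (norm_nonneg C) hC)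
    calc ‖C ^ (m + 1) - 1‖ ≤ ‖C ^ m * (C - 1)‖ + ‖C ^ m - 1‖ := by
          rw [key]; exact norm_add_le _ _
      _ ≤ ‖C ^ m‖ * ‖C - 1‖ + (m : ℝ) * ‖C - 1‖ := by
          gcongr
          exact norm_mul_le _ _
      _ ≤ 1 * ‖C - 1‖ + (m : ℝ) * ‖C - 1‖ := by
          gcongr
      _ = ((m + 1 : ℕ) : ℝ) * ‖C - 1‖ := by push_cast; ring

omit [CompleteSpace X] in
lemma aux_pow_sub_pow (C : X →L[ℝ] X) (hC : ‖C‖ ≤ 1) (n k : ℕ) :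
    ‖C ^ n - C ^ k‖ ≤ |(n : ℝ) - (k : ℝ)| * ‖C - 1‖ := by
  have hpow : ∀ j : ℕ, ‖C ^ j‖ ≤ 1 := by
    intro j
    cases j with
    | zero => rw [pow_zero]; exact ContinuousLinearMap.norm_id_le
    | succ j => exact (norm_pow_le' C j.succ_pos).trans (pow_le_one₀ (norm_nonneg C) hC)
  have main : ∀ a b : ℕ, a ≤ b → ‖C ^ b - C ^ a‖ ≤ |(b : ℝ) - (a : ℝ)| * ‖C - 1‖ := by
    intro a b hab
    have key : C ^ b - C ^ a = C ^ a * (C ^ (b - a) - 1) := by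
      rw [mul_sub, mul_one, ← pow_add, Nat.add_sub_cancel' hab]
    rw [key]
    calc ‖C ^ a * (C ^ (b - a) - 1)‖ ≤ ‖C ^ a‖ * ‖C ^ (b - a) - 1‖ := norm_mul_le _ _
      _ ≤ 1 * (((b - a : ℕ) : ℝ) * ‖C - 1‖) := by
          gcongr
          · exact hpow a
          · exact aux_pow_sub_one C hC (b - a)
      _ = |(b : ℝ) - (a : ℝ)| * ‖C - 1‖ := by
          rw [one_mul, Nat.cast_sub hab, abs_of_nonneg (by
            have := Nat.cast_le (α := ℝ).2 hab; linarith)]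
  rcases le_total k n with h | h
  · exact main k n h
  · rw [← norm_neg, neg_sub, ← abs_neg, neg_sub]
    exact main n k h

end Op

lemma aux_norm_pow_le {X : Type*} [NormedAddCommGroup X] [NormedSpace ℝ X]
    (C : X →L[ℝ] X) (hC : ‖C‖ ≤ 1) (j : ℕ) : ‖C ^ j‖ ≤ 1 := by
  cases j with
  | zero => rw [pow_zero]; exact ContinuousLinearMap.norm_id_le
  | succ j => exact (norm_pow_le' C j.succ_pos).trans (pow_le_one₀ (norm_nonneg C) hC)

set_option maxHeartbeats 1000000 in
set_option synthInstance.maxHeartbeats 1000000 in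
/-- **Chernoff's `√n`-Lemma.**
For a contraction `C` on a Banach space `X`, `‖Cⁿ − e^{n(C − 𝟙)}‖ ≤ √n ‖C − 𝟙‖` for all `n`. -/
theorem chernoff_sqrt_n_lemma
    {X : Type*} [NormedAddCommGroup X] [NormedSpace ℝ X] [CompleteSpace X]
    (C : X →L[ℝ] X) (hC : ‖C‖ ≤ 1) (n : ℕ) :
    ‖C ^ n - NormedSpace.exp ((n : ℝ) • (C - 1))‖ ≤ Real.sqrt n * ‖C - 1‖ := by
  set x : ℝ := (n : ℝ) with hx
  have hx0 : 0 ≤ x := Nat.cast_nonneg n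
  -- split the exponential
  have h1 : (x • (C - 1) : X →L[ℝ] X) = x • C + (-x) • 1 := by
    rw [smul_sub, neg_smul, sub_eq_add_neg]
  have hcomm : Commute (x • C) ((-x) • (1 : X →L[ℝ] X)) :=
    ((Commute.one_right (x • C)).smul_right (-x))
  have hexp1 : NormedSpace.exp ((-x) • (1 : X →L[ℝ] X))
      = Real.exp (-x) • (1 : X →L[ℝ] X) := by
    have : ((-x) • (1 : X →L[ℝ] X)) = algebraMap ℝ (X →L[ℝ] X) (-x) := by
      rw [Algebra.algebraMap_eq_smul_one]
    rw [this, ← NormedSpace.algebraMap_exp_comm, ← Real.exp_eq_exp_ℝ,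
      Algebra.algebraMap_eq_smul_one]
  have hsplit : NormedSpace.exp (x • (C - 1))
      = Real.exp (-x) • NormedSpace.exp (x • C) := by
    rw [h1, NormedSpace.exp_add_of_commute_of_mem_ball (𝕂 := ℝ) hcomm
      ((NormedSpace.expSeries_radius_eq_top ℝ (X →L[ℝ] X)).symm ▸ edist_lt_top _ _)
      ((NormedSpace.expSeries_radius_eq_top ℝ (X →L[ℝ] X)).symm ▸ edist_lt_top _ _), hexp1, mul_smul_comm, mul_one]
  -- series expansions
  have hsuma : Summable fun k : ℕ => x ^ k / k ! := Real.summable_pow_div_factorial x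
  have hexp2 : NormedSpace.exp (x • C) = ∑' k : ℕ, (x ^ k / k !) • C ^ k := by
    rw [NormedSpace.exp_eq_tsum ℝ]
    refine tsum_congr fun k => ?_
    rw [smul_pow, smul_smul, div_eq_inv_mul]
  have hS2 : Summable fun k : ℕ => (x ^ k / k !) • C ^ k := by
    refine Summable.of_norm_bounded hsuma fun k => ?_
    rw [norm_smul (x ^ k / (k ! : ℝ)) (C ^ k), Real.norm_eq_abs, abs_of_nonneg (by positivity)]
    calc (x ^ k / k !) * ‖C ^ k‖ ≤ (x ^ k / k !) * 1 :=
          mul_le_mul_of_nonneg_left (aux_norm_pow_le C hC k) (by positivity)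
      _ = x ^ k / k ! := mul_one _
  have hS1 : Summable fun k : ℕ => (x ^ k / k !) • C ^ n := hsuma.smul_const _
  have hrep : Real.exp x • C ^ n = ∑' k : ℕ, (x ^ k / k !) • C ^ n := by
    rw [Summable.tsum_smul_const hsuma, aux_sum_a]
  -- main difference as a series
  have hdiff : Real.exp x • C ^ n - NormedSpace.exp (x • C)
      = ∑' k : ℕ, (x ^ k / k !) • (C ^ n - C ^ k) := by
    rw [hrep, hexp2, ← Summable.tsum_sub hS1 hS2]
    exact tsum_congr fun k => (smul_sub _ _ _).symm
  -- norm bound on the series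
  have habs := aux_summable_abs x hx0
  have hbound : ‖∑' k : ℕ, (x ^ k / k !) • (C ^ n - C ^ k)‖
      ≤ (∑' k : ℕ, |x - (k : ℝ)| * (x ^ k / k !)) * ‖C - 1‖ := by
    refine tsum_of_norm_bounded (habs.hasSum.mul_right ‖C - 1‖) fun k => ?_
    rw [norm_smul (x ^ k / (k ! : ℝ)) (C ^ n - C ^ k), Real.norm_eq_abs,
      abs_of_nonneg (by positivity : (0:ℝ) ≤ x ^ k / k !)]
    calc (x ^ k / k !) * ‖C ^ n - C ^ k‖
        ≤ (x ^ k / k !) * (|x - (k : ℝ)| * ‖C - 1‖) :=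
          mul_le_mul_of_nonneg_left (aux_pow_sub_pow C hC n k) (by positivity)
      _ = |x - (k : ℝ)| * (x ^ k / k !) * ‖C - 1‖ := by ring
  -- put it together
  have hne : Real.exp (-x) * Real.exp x = 1 := by
    rw [← Real.exp_add, neg_add_cancel, Real.exp_zero]
  have hfinal : C ^ n - NormedSpace.exp (x • (C - 1))
      = Real.exp (-x) • (Real.exp x • C ^ n - NormedSpace.exp (x • C)) := by
    rw [hsplit, smul_sub, smul_smul, hne, one_smul]
  rw [hfinal, norm_smul (Real.exp (-x)) (Real.exp x • C ^ n - NormedSpace.exp (x • C)),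
    Real.norm_eq_abs, abs_of_nonneg (Real.exp_pos _).le]
  calc Real.exp (-x) * ‖Real.exp x • C ^ n - NormedSpace.exp (x • C)‖
      ≤ Real.exp (-x) * ((∑' k : ℕ, |x - (k : ℝ)| * (x ^ k / k !)) * ‖C - 1‖) := by
        rw [hdiff]; exact mul_le_mul_of_nonneg_left hbound (Real.exp_pos _).le
    _ ≤ Real.exp (-x) * (Real.sqrt x * Real.exp x * ‖C - 1‖) :=
        mul_le_mul_of_nonneg_left
          (mul_le_mul_of_nonneg_right (aux_sum_abs_le x hx0) (norm_nonneg _))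
          (Real.exp_pos _).le
    _ = Real.sqrt x * ‖C - 1‖ := by
        rw [show Real.exp (-x) * (Real.sqrt x * Real.exp x * ‖C - 1‖)
          = (Real.exp (-x) * Real.exp x) * (Real.sqrt x * ‖C - 1‖) by ring, hne, one_mul]
end

section
/- Let X be a Banach space, (C_n)_{n∈ℕ} a sequence of contractions in B(X), and G ∈ B(X) such that ‖n(C_n − 𝟙) − G‖ → 0 as n → ∞, where 𝟙 is the identity operator. Then ‖C_n^n − e^{G}‖ → 0 as n → ∞. -/
open NormedSpace Filter Nat

section Aux

variable {A : Type*} [NormedRing A] [NormedAlgebra ℝ A] [CompleteSpace A]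

lemma aux_norm_pow_le_s5 (x : A) (h1 : ‖(1 : A)‖ ≤ 1) (n : ℕ) : ‖x ^ n‖ ≤ ‖x‖ ^ n := by
  cases n with
  | zero => simpa using h1
  | succ n => exact norm_pow_le' x n.succ_pos

lemma aux_norm_exp_le (x : A) (h1 : ‖(1 : A)‖ ≤ 1) : ‖exp x‖ ≤ Real.exp ‖x‖ := by
  rw [exp_eq_tsum ℝ]
  have hsum : Summable fun n : ℕ => ‖x‖ ^ n / n ! := Real.summable_pow_div_factorial ‖x‖
  have hb : ∀ n : ℕ, ‖((n ! : ℝ))⁻¹ • x ^ n‖ ≤ ‖x‖ ^ n / n ! := by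
    intro n
    rw [norm_smul, norm_inv, Real.norm_natCast, div_eq_inv_mul]
    gcongr
    exact aux_norm_pow_le_s5 x h1 n
  have hsn : Summable fun n : ℕ => ‖((n ! : ℝ))⁻¹ • x ^ n‖ :=
    Summable.of_nonneg_of_le (fun n => norm_nonneg _) hb hsum
  calc ‖∑' n : ℕ, ((n ! : ℝ))⁻¹ • x ^ n‖ ≤ ∑' n : ℕ, ‖((n ! : ℝ))⁻¹ • x ^ n‖ :=
        norm_tsum_le_tsum_norm hsn
    _ ≤ ∑' n : ℕ, ‖x‖ ^ n / n ! := Summable.tsum_le_tsum hb hsn hsum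
    _ = Real.exp ‖x‖ := by rw [Real.exp_eq_exp_ℝ, exp_eq_tsum_div]

set_option maxHeartbeats 1000000 in
/-- remainder bound: `‖exp x - 1 - x‖ ≤ ‖x‖² * exp ‖x‖`. -/
lemma aux_exp_remainder (x : A) : ‖exp x - 1 - x‖ ≤ ‖x‖ ^ 2 * Real.exp ‖x‖ := by
  have hs : Summable fun n : ℕ => ((n ! : ℝ))⁻¹ • x ^ n := expSeries_summable' (𝕂 := ℝ) x
  have h0 : exp x = ∑' n : ℕ, ((n ! : ℝ))⁻¹ • x ^ n := by rw [exp_eq_tsum ℝ]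
  have hs1 : Summable fun n : ℕ => (((n + 1)! : ℝ))⁻¹ • x ^ (n + 1) :=
    (summable_nat_add_iff 1).mpr hs
  have hs2 : Summable fun n : ℕ => (((n + 2)! : ℝ))⁻¹ • x ^ (n + 2) :=
    (summable_nat_add_iff 2).mpr hs
  have h1 : exp x - 1 - x = ∑' n : ℕ, (((n + 2)! : ℝ))⁻¹ • x ^ (n + 2) := by
    rw [h0, Summable.tsum_eq_zero_add hs, Summable.tsum_eq_zero_add hs1]
    norm_num
  rw [h1]
  have hb : ∀ n : ℕ, ‖(((n + 2)! : ℝ))⁻¹ • x ^ (n + 2)‖ ≤ ‖x‖ ^ 2 * (‖x‖ ^ n / n !) := by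
    intro n
    rw [norm_smul, norm_inv, Real.norm_natCast]
    calc ((((n + 2)! : ℝ)))⁻¹ * ‖x ^ (n + 2)‖
        ≤ ((n ! : ℝ))⁻¹ * ‖x‖ ^ (n + 2) := by
          have hfac : (((n + 2)! : ℝ))⁻¹ ≤ ((n ! : ℝ))⁻¹ := by
            apply inv_anti₀ (by positivity)
            exact_mod_cast Nat.factorial_le (by omega)
          exact mul_le_mul hfac (norm_pow_le' x (by omega)) (norm_nonneg _) (by positivity)
      _ = ‖x‖ ^ 2 * (‖x‖ ^ n / n !) := by rw [pow_add]; ring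
  have hsum2 : Summable fun n : ℕ => ‖x‖ ^ 2 * (‖x‖ ^ n / n !) :=
    (Real.summable_pow_div_factorial ‖x‖).mul_left _
  have hsn : Summable fun n : ℕ => ‖(((n + 2)! : ℝ))⁻¹ • x ^ (n + 2)‖ :=
    Summable.of_nonneg_of_le (fun n => norm_nonneg _) hb hsum2
  calc ‖∑' n : ℕ, (((n + 2)! : ℝ))⁻¹ • x ^ (n + 2)‖
      ≤ ∑' n : ℕ, ‖(((n + 2)! : ℝ))⁻¹ • x ^ (n + 2)‖ := norm_tsum_le_tsum_norm hsn
    _ ≤ ∑' n : ℕ, ‖x‖ ^ 2 * (‖x‖ ^ n / n !) := Summable.tsum_le_tsum hb hsn hsum2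
    _ = ‖x‖ ^ 2 * Real.exp ‖x‖ := by
        rw [tsum_mul_left, Real.exp_eq_exp_ℝ, exp_eq_tsum_div]

/-- telescoping bound for powers of contractions. -/
lemma aux_pow_sub_pow_s5 (S T : A) (h1 : ‖(1 : A)‖ ≤ 1) (hS : ‖S‖ ≤ 1) (hT : ‖T‖ ≤ 1) (n : ℕ) :
    ‖S ^ n - T ^ n‖ ≤ n * ‖S - T‖ := by
  induction n with
  | zero => simp
  | succ n ih =>
    have key : S ^ (n + 1) - T ^ (n + 1) = (S ^ n - T ^ n) * T + S ^ n * (S - T) := by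
      rw [pow_succ, pow_succ]
      noncomm_ring
    have hSn : ‖S ^ n‖ ≤ 1 :=
      (aux_norm_pow_le_s5 S h1 n).trans (pow_le_one₀ (norm_nonneg _) hS)
    rw [key]
    calc ‖(S ^ n - T ^ n) * T + S ^ n * (S - T)‖
        ≤ ‖(S ^ n - T ^ n) * T‖ + ‖S ^ n * (S - T)‖ := norm_add_le _ _
      _ ≤ ‖S ^ n - T ^ n‖ * ‖T‖ + ‖S ^ n‖ * ‖S - T‖ :=
          add_le_add (norm_mul_le _ _) (norm_mul_le _ _)
      _ ≤ (n * ‖S - T‖) * 1 + 1 * ‖S - T‖ := by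
          apply _root_.add_le_add
          · exact mul_le_mul ih hT (norm_nonneg _)
              (by positivity)
          · exact mul_le_mul_of_nonneg_right hSn (norm_nonneg _)
      _ = (↑(n + 1)) * ‖S - T‖ := by push_cast; ring

end Aux

/-- **Chernoff-type convergence.**
If `(Cₙ)` is a sequence of contractions on a Banach space and `‖n(Cₙ − 𝟙) − G‖ → 0` for a
bounded operator `G`, then `‖Cₙⁿ − e^G‖ → 0`. -/
theorem chernoff_convergence
    {X : Type*} [NormedAddCommGroup X] [NormedSpace ℝ X] [CompleteSpace X]
    (C : ℕ → X →L[ℝ] X) (hC : ∀ n, ‖C n‖ ≤ 1) (G : X →L[ℝ] X)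
    (h : Filter.Tendsto (fun n : ℕ => ‖(n : ℝ) • (C n - 1) - G‖) Filter.atTop (nhds 0)) :
    Filter.Tendsto (fun n : ℕ => ‖(C n) ^ n - NormedSpace.exp G‖) Filter.atTop (nhds 0) := by
  have h1 : ‖(1 : X →L[ℝ] X)‖ ≤ 1 := ContinuousLinearMap.norm_id_le
  let +nondep : NormedAlgebra ℚ (X →L[ℝ] X) := .restrictScalars ℚ ℝ (X →L[ℝ] X)
  set A : ℕ → X →L[ℝ] X := fun n => (n : ℝ) • (C n - 1) with hA
  have hAG : Tendsto A atTop (nhds G) := by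
    rw [tendsto_iff_norm_sub_tendsto_zero]
    exact h
  have hexp : Tendsto (fun n => ‖exp (A n) - exp G‖) atTop (nhds 0) := by
    rw [← tendsto_iff_norm_sub_tendsto_zero]
    exact (exp_continuous.tendsto G).comp hAG
  -- `exp (C n - 1)` is a contraction
  have hE : ∀ n, ‖exp (C n - 1)‖ ≤ 1 := by
    intro n
    have e1 : exp (-(1 : X →L[ℝ] X)) = Real.exp (-1) • (1 : X →L[ℝ] X) := by
      have h2 := algebraMap_exp_comm (𝕂 := ℝ) (𝔸 := X →L[ℝ] X) (-1 : ℝ)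
      rw [map_neg, map_one] at h2
      rw [← h2, Algebra.algebraMap_eq_smul_one, ← Real.exp_eq_exp_ℝ]
    have e2 : exp (C n - 1) = exp (C n) * exp (-(1 : X →L[ℝ] X)) := by
      rw [sub_eq_add_neg, exp_add_of_commute ((Commute.one_right (C n)).neg_right)]
    calc ‖exp (C n - 1)‖ = ‖exp (C n) * (Real.exp (-1) • (1 : X →L[ℝ] X))‖ := by
          rw [e2, e1]
      _ ≤ ‖exp (C n)‖ * ‖Real.exp (-1) • (1 : X →L[ℝ] X)‖ := norm_mul_le _ _
      _ ≤ Real.exp ‖C n‖ * (Real.exp (-1) * 1) := by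
          apply mul_le_mul (aux_norm_exp_le _ h1) ?_ (norm_nonneg _) (Real.exp_nonneg _)
          refine (_root_.norm_smul_le (Real.exp (-1)) (1 : X →L[ℝ] X)).trans ?_
          rw [Real.norm_eq_abs, Real.abs_exp]
          exact mul_le_mul_of_nonneg_left h1 (Real.exp_nonneg _)
      _ ≤ 1 := by
          rw [mul_one, ← Real.exp_add]
          rw [Real.exp_le_one_iff]
          linarith [hC n]
  -- the key quantitative estimate
  have key : ∀ n : ℕ, 1 ≤ n →
      ‖C n ^ n - exp (A n)‖ ≤ ‖A n‖ ^ 2 * Real.exp 2 / n := by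
    intro n hn
    have hn0 : (0 : ℝ) < n := by exact_mod_cast hn
    have hDn : ‖C n - 1‖ ≤ 2 := by
      calc ‖C n - 1‖ ≤ ‖C n‖ + ‖(1 : X →L[ℝ] X)‖ := norm_sub_le _ _
        _ ≤ 1 + 1 := add_le_add (hC n) h1
        _ = 2 := by norm_num
    have hexpD : exp (A n) = (exp (C n - 1)) ^ n := by
      rw [hA]
      simp only
      rw [Nat.cast_smul_eq_nsmul ℝ n (C n - 1), exp_nsmul]
    have h3 : ‖C n - exp (C n - 1)‖ ≤ ‖C n - 1‖ ^ 2 * Real.exp 2 := by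
      have heq : ‖C n - exp (C n - 1)‖ = ‖exp (C n - 1) - 1 - (C n - 1)‖ := by
        rw [← norm_neg]; congr 1; abel
      rw [heq]
      refine (aux_exp_remainder _).trans ?_
      exact mul_le_mul_of_nonneg_left (Real.exp_le_exp.mpr hDn) (by positivity)
    have hAnrm : ‖A n‖ = n * ‖C n - 1‖ := by
      rw [hA]
      simp only
      rw [norm_smul (n : ℝ) (C n - 1), Real.norm_natCast]
    calc ‖C n ^ n - exp (A n)‖ = ‖C n ^ n - (exp (C n - 1)) ^ n‖ := by rw [hexpD]
      _ ≤ n * ‖C n - exp (C n - 1)‖ := aux_pow_sub_pow_s5 _ _ h1 (hC n) (hE n) n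
      _ ≤ n * (‖C n - 1‖ ^ 2 * Real.exp 2) := by
          exact mul_le_mul_of_nonneg_left h3 (by positivity)
      _ = ‖A n‖ ^ 2 * Real.exp 2 / n := by
          rw [hAnrm]
          field_simp
  -- squeeze
  have hdiv : Tendsto (fun n : ℕ => ‖A n‖ ^ 2 * Real.exp 2 / n) atTop (nhds 0) := by
    apply Tendsto.div_atTop ((hAG.norm.pow 2).mul_const _) tendsto_natCast_atTop_atTop
  have hb : Tendsto (fun n : ℕ => ‖A n‖ ^ 2 * Real.exp 2 / n + ‖exp (A n) - exp G‖)
      atTop (nhds 0) := by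
    simpa using hdiv.add hexp
  apply squeeze_zero' (Eventually.of_forall fun n => norm_nonneg _) ?_ hb
  filter_upwards [eventually_ge_atTop 1] with n hn
  calc ‖C n ^ n - exp G‖ ≤ ‖C n ^ n - exp (A n)‖ + ‖exp (A n) - exp G‖ :=
        norm_sub_le_norm_sub_add_norm_sub _ _ _
    _ ≤ ‖A n‖ ^ 2 * Real.exp 2 / n + ‖exp (A n) - exp G‖ :=
        add_le_add_left (key n hn) _
end

section
/- Let X be a Banach space, t ↦ L_t an L-Lipschitz map from [0,τ] into B(X), and T_{[t,s]} a propagator for the family (L_t). Then for all s, t and δ ≥ 0 in the relevant range, ‖T_{[t+δ,t]} − e^{δ L_s}‖ ≤ L·(δ·|t−s| + δ²/2), provided also that ‖e^{r L_s}‖ ≤ 1 for all r ≥ 0 and all s. -/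
/-- **Piecewise-constant approximation of a time-dependent evolution (Lemma 4).**
If `t ↦ A t` is an `L`-Lipschitz family of bounded generators of contraction semigroups on
`[0, τ]` and `T t s` is a propagator for this family, then
`‖T (t+δ) t − e^{δ A s}‖ ≤ L (δ |t − s| + δ²/2)`. -/
theorem propagator_piecewise_constant_approx
    {X : Type*} [NormedAddCommGroup X] [NormedSpace ℝ X] [CompleteSpace X]
    (τ : ℝ) (hτ : 0 ≤ τ)
    (L : ℝ) (A : ℝ → X →L[ℝ] X)
    (hLip : ∀ t ∈ Set.Icc (0 : ℝ) τ, ∀ s ∈ Set.Icc (0 : ℝ) τ, ‖A t - A s‖ ≤ L * |t - s|)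
    (hcontr : ∀ s ∈ Set.Icc (0 : ℝ) τ, ∀ r : ℝ, 0 ≤ r → ‖NormedSpace.exp (r • A s)‖ ≤ 1)
    (T : ℝ → ℝ → X →L[ℝ] X)
    (hTnorm : ∀ s t : ℝ, 0 ≤ s → s ≤ t → t ≤ τ → ‖T t s‖ ≤ 1)
    (hTid : ∀ t ∈ Set.Icc (0 : ℝ) τ, T t t = 1)
    (hTcomp : ∀ s r t : ℝ, 0 ≤ s → s ≤ r → r ≤ t → t ≤ τ → T t r * T r s = T t s)
    (hTderiv : ∀ t ∈ Set.Icc (0 : ℝ) τ, ∀ s ∈ Set.Icc (0 : ℝ) t,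
      HasDerivWithinAt (fun u => T t u) (-(T t s * A s)) (Set.Icc (0 : ℝ) t) s) :
    ∀ s ∈ Set.Icc (0 : ℝ) τ, ∀ t δ : ℝ, 0 ≤ t → 0 ≤ δ → t + δ ≤ τ →
      ‖T (t + δ) t - NormedSpace.exp (δ • A s)‖ ≤ L * (δ * |t - s| + δ ^ 2 / 2) := by
  intro s hs t δ ht hδ htd
  rcases eq_or_lt_of_le hδ with rfl | hδpos
  · have h1 : T t t = 1 := hTid t ⟨ht, by linarith⟩
    simp [h1, NormedSpace.exp_zero]
  -- L is nonnegative
  have hτpos : 0 < τ := by linarith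
  have hL0 : 0 ≤ L := by
    have h := hLip τ ⟨hτ, le_refl τ⟩ 0 ⟨le_refl 0, hτ⟩
    have h0 : (0 : ℝ) ≤ ‖A τ - A 0‖ := norm_nonneg _
    rw [sub_zero, abs_of_pos hτpos] at h
    nlinarith
  set E : ℝ → (X →L[ℝ] X) := fun u => NormedSpace.exp ((u - t) • A s) with hE
  set F : ℝ → (X →L[ℝ] X) := fun u => T (t + δ) u * E u with hFdef
  have htd0 : t + δ ∈ Set.Icc (0 : ℝ) τ := ⟨by linarith, htd⟩
  -- derivative of E
  have hEderiv : ∀ u : ℝ, HasDerivAt E (A s * E u) u := by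
    intro u
    have h1 : HasDerivAt (fun u : ℝ => u - t) 1 u := (hasDerivAt_id u).sub_const t
    have h2 := hasDerivAt_exp_smul_const' (𝕂 := ℝ) (A s) (u - t)
    have := HasDerivAt.scomp (𝕜 := ℝ) u h2 h1
    rw [one_smul] at this
    exact this
  -- derivative of T (t+δ) · within Icc t (t+δ)
  have hT : ∀ u ∈ Set.Icc t (t + δ),
      HasDerivWithinAt (fun u => T (t + δ) u) (-(T (t + δ) u * A u)) (Set.Icc t (t + δ)) u := by
    intro u hu
    exact (hTderiv (t + δ) htd0 u ⟨by linarith [hu.1], hu.2⟩).mono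
      (Set.Icc_subset_Icc (by linarith) le_rfl)
  set f' : ℝ → (X →L[ℝ] X) := fun u => T (t + δ) u * (A s - A u) * E u with hf'def
  have hFd : ∀ u ∈ Set.Icc t (t + δ),
      HasDerivWithinAt F (f' u) (Set.Icc t (t + δ)) u := by
    intro u hu
    have h := (hT u hu).mul ((hEderiv u).hasDerivWithinAt)
    refine h.congr_deriv ?_
    simp only [hf'def]
    noncomm_ring
  have hFcont : ContinuousOn F (Set.Icc t (t + δ)) :=
    fun u hu => (hFd u hu).continuousWithinAt
  -- bound on f'
  have hbound : ∀ u ∈ Set.Ico t (t + δ), ‖f' u‖ ≤ L * (|t - s| + (u - t)) := by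
    intro u hu
    obtain ⟨hu1, hu2⟩ := hu
    have hu0 : (0 : ℝ) ≤ u := by linarith
    have huτ : u ≤ τ := by linarith
    have hTn : ‖T (t + δ) u‖ ≤ 1 := hTnorm u (t + δ) hu0 (by linarith) htd
    have hEn : ‖E u‖ ≤ 1 := hcontr s hs (u - t) (by linarith)
    have hAn : ‖A s - A u‖ ≤ L * |u - s| := by
      have := hLip s hs u ⟨hu0, huτ⟩
      rwa [abs_sub_comm]
    have hLu : (0 : ℝ) ≤ L * |u - s| := mul_nonneg hL0 (abs_nonneg _)
    calc ‖f' u‖ ≤ ‖T (t + δ) u * (A s - A u)‖ * ‖E u‖ := norm_mul_le _ _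
      _ ≤ ‖T (t + δ) u‖ * ‖A s - A u‖ * ‖E u‖ :=
          mul_le_mul_of_nonneg_right (norm_mul_le _ _) (norm_nonneg _)
      _ ≤ 1 * (L * |u - s|) * 1 := by
          apply mul_le_mul _ hEn (norm_nonneg _) (by linarith)
          exact mul_le_mul hTn hAn (norm_nonneg _) zero_le_one
      _ = L * |u - s| := by ring
      _ ≤ L * (|t - s| + (u - t)) := by
          have h3 : |u - s| ≤ |u - t| + |t - s| := abs_sub_le u t s
          have h2 : |u - t| = u - t := abs_of_nonneg (by linarith)
          apply mul_le_mul_of_nonneg_left _ hL0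
          linarith
  -- boundary function
  set B : ℝ → ℝ := fun u => L * (|t - s| * (u - t) + (u - t) ^ 2 / 2) with hBdef
  have hBd : ∀ u : ℝ, HasDerivAt B (L * (|t - s| + (u - t))) u := by
    intro u
    have h1 : HasDerivAt (fun u : ℝ => u - t) 1 u := (hasDerivAt_id u).sub_const t
    have := ((h1.const_mul |t - s|).add ((h1.pow 2).div_const 2)).const_mul L
    refine this.congr_deriv ?_
    norm_num
  have key := image_norm_le_of_norm_deriv_right_le_deriv_boundary
    (f := fun u => F u - F t) (a := t) (b := t + δ) (f' := f')
    (hFcont.sub continuousOn_const)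
    (fun x hx => by
      have hmem : Set.Icc t (t + δ) ∈ nhdsWithin x (Set.Ici x) :=
        Icc_mem_nhdsGE_of_mem hx
      exact ((hFd x ⟨hx.1, hx.2.le⟩).sub_const (F t)).mono_of_mem_nhdsWithin hmem)
    (B := B) (B' := fun u => L * (|t - s| + (u - t)))
    (by simp [hBdef])
    hBd
    hbound
  have hfinal := key (Set.right_mem_Icc.2 (by linarith))
  have hFt : F t = T (t + δ) t := by
    simp [hFdef, hE, NormedSpace.exp_zero]
  have hFtd : F (t + δ) = NormedSpace.exp (δ • A s) := by
    simp [hFdef, hE, hTid (t + δ) htd0]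
  rw [hFtd, hFt] at hfinal
  rw [norm_sub_rev] at hfinal
  calc ‖T (t + δ) t - NormedSpace.exp (δ • A s)‖ ≤ B (t + δ) := hfinal
    _ = L * (|t - s| * (t + δ - t) + (t + δ - t) ^ 2 / 2) := rfl
    _ = L * (δ * |t - s| + δ ^ 2 / 2) := by ring
end

section
/- Let X be a Banach space, t ↦ L_t an L-Lipschitz map from [0,τ] into B(X), and T_{[t,s]} a propagator for the family (L_t). Then for all t and δ ≥ 0 with t + δ ≤ τ, the identity T_{[t+δ,t]} − e^{δ L_t} = ∫_t^{t+δ} T_{[t+δ,r]} (L_r − L_t) e^{(r−t) L_t} dr holds (integral in operator norm), and consequently ‖T_{[t+δ,t]} − e^{δ L_t}‖ ≤ L δ²/2 provided ‖e^{r L_t}‖ ≤ 1 for all r ≥ 0. -/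
set_option maxHeartbeats 1000000
set_option synthInstance.maxHeartbeats 400000


/-- **Duhamel-type identity for the propagator.**
If `t ↦ A t` is an `L`-Lipschitz family on `[0, τ]` and `T t s` a propagator for it, then
`T (t+δ) t − e^{δ A t} = ∫_t^{t+δ} T (t+δ) r (A r − A t) e^{(r−t) A t} dr`, and if moreover
`‖e^{r A t}‖ ≤ 1` for all `r ≥ 0`, then `‖T (t+δ) t − e^{δ A t}‖ ≤ L δ²/2`. -/
theorem propagator_duhamel_identity
    {X : Type*} [NormedAddCommGroup X] [NormedSpace ℝ X] [CompleteSpace X]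
    (τ : ℝ) (hτ : 0 ≤ τ)
    (L : ℝ) (A : ℝ → X →L[ℝ] X)
    (hLip : ∀ t ∈ Set.Icc (0 : ℝ) τ, ∀ s ∈ Set.Icc (0 : ℝ) τ, ‖A t - A s‖ ≤ L * |t - s|)
    (T : ℝ → ℝ → X →L[ℝ] X)
    (hTnorm : ∀ s t : ℝ, 0 ≤ s → s ≤ t → t ≤ τ → ‖T t s‖ ≤ 1)
    (hTid : ∀ t ∈ Set.Icc (0 : ℝ) τ, T t t = 1)
    (hTcomp : ∀ s r t : ℝ, 0 ≤ s → s ≤ r → r ≤ t → t ≤ τ → T t r * T r s = T t s)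
    (hTderiv : ∀ t ∈ Set.Icc (0 : ℝ) τ, ∀ s ∈ Set.Icc (0 : ℝ) t,
      HasDerivWithinAt (fun u => T t u) (-(T t s * A s)) (Set.Icc (0 : ℝ) t) s) :
    ∀ t δ : ℝ, 0 ≤ t → 0 ≤ δ → t + δ ≤ τ →
      (T (t + δ) t - NormedSpace.exp (δ • A t) =
        ∫ r in t..(t + δ), T (t + δ) r * (A r - A t) * NormedSpace.exp ((r - t) • A t)) ∧
      ((∀ r : ℝ, 0 ≤ r → ‖NormedSpace.exp (r • A t)‖ ≤ 1) →
        ‖T (t + δ) t - NormedSpace.exp (δ • A t)‖ ≤ L * δ ^ 2 / 2) := by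
  intro t δ ht hδ htd
  have htτ : t ≤ τ := by linarith
  have httδ : t ≤ t + δ := by linarith
  set E : ℝ → (X →L[ℝ] X) := fun r => NormedSpace.exp ((r - t) • A t) with hEdef
  set G : ℝ → (X →L[ℝ] X) := fun r => T (t + δ) r * (A r - A t) * E r with hGdef
  -- derivative of E
  have hE : ∀ r : ℝ, HasDerivAt E (E r * A t) r := by
    intro r
    have h1 := hasDerivAt_exp_smul_const (𝕂 := ℝ) (A t) (r - t)
    have h2 : HasDerivAt (fun u : ℝ => u - t) 1 r := (hasDerivAt_id r).sub_const t
    have h3 := HasDerivAt.scomp (x := r) h1 h2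
    simp at h3
    exact h3
  have hEcont : Continuous E :=
    continuous_iff_continuousAt.mpr fun r => (hE r).continuousAt
  -- commutation
  have hEcomm : ∀ r : ℝ, E r * A t = A t * E r := by
    intro r
    have hc : Commute ((r - t) • A t) (A t) := by
      show _ * _ = _ * _
      rw [smul_mul_assoc, mul_smul_comm]
    exact (hc.exp_left).eq
  -- derivative of F := T(t+δ) · * E ·
  set F : ℝ → (X →L[ℝ] X) := fun r => T (t + δ) r * E r with hFdef
  have hF : ∀ s ∈ Set.Icc t (t + δ),
      HasDerivWithinAt F (-(G s)) (Set.Icc (0 : ℝ) (t + δ)) s := by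
    intro s hs
    have hsm : s ∈ Set.Icc (0 : ℝ) (t + δ) := ⟨by linarith [hs.1], hs.2⟩
    have hT := hTderiv (t + δ) ⟨by linarith, htd⟩ s hsm
    have hEs : HasDerivWithinAt E (E s * A t) (Set.Icc (0 : ℝ) (t + δ)) s :=
      (hE s).hasDerivWithinAt
    have hprod := hT.mul hEs
    refine (hprod : HasDerivWithinAt F _ _ _).congr_deriv ?_
    show _ = -(T (t + δ) s * (A s - A t) * E s)
    rw [hEcomm s]
    noncomm_ring
  have hFcont : ContinuousOn F (Set.Icc t (t + δ)) := fun s hs =>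
    ((hF s hs).mono (Set.Icc_subset_Icc (by linarith) le_rfl)).continuousWithinAt
  -- continuity of A
  have hAcont : ContinuousOn A (Set.Icc (0 : ℝ) τ) := by
    have : LipschitzOnWith (Real.toNNReal L) A (Set.Icc (0 : ℝ) τ) := by
      apply LipschitzOnWith.of_dist_le_mul
      intro x hx y hy
      rw [dist_eq_norm, Real.dist_eq]
      calc ‖A x - A y‖ ≤ L * |x - y| := hLip x hx y hy
        _ ≤ Real.toNNReal L * |x - y| := by
            apply mul_le_mul_of_nonneg_right (Real.le_coe_toNNReal L) (abs_nonneg _)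
    exact this.continuousOn
  -- continuity of T (t+δ) ·
  have hTcont : ContinuousOn (fun u => T (t + δ) u) (Set.Icc t (t + δ)) := by
    intro s hs
    have hsm : s ∈ Set.Icc (0 : ℝ) (t + δ) := ⟨by linarith [hs.1], hs.2⟩
    exact ((hTderiv (t + δ) ⟨by linarith, htd⟩ s hsm).mono
      (Set.Icc_subset_Icc (by linarith) le_rfl)).continuousWithinAt
  -- continuity of G
  have hGcont : ContinuousOn G (Set.Icc t (t + δ)) := by
    apply ContinuousOn.mul
    · apply ContinuousOn.mul hTcont
      apply ContinuousOn.sub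
      · exact hAcont.mono (Set.Icc_subset_Icc ht (by linarith))
      · exact continuousOn_const
    · exact hEcont.continuousOn
  have hGint : IntervalIntegrable G MeasureTheory.volume t (t + δ) := by
    apply ContinuousOn.intervalIntegrable
    rwa [Set.uIcc_of_le httδ]
  -- FTC
  have hFTC : (∫ r in t..(t + δ), -(G r)) = F (t + δ) - F t := by
    apply intervalIntegral.integral_eq_sub_of_hasDeriv_right_of_le httδ hFcont
    · intro x hx
      have hxm : x ∈ Set.Icc t (t + δ) := ⟨le_of_lt hx.1, le_of_lt hx.2⟩
      have hnhds : Set.Icc (0 : ℝ) (t + δ) ∈ nhds x := by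
        apply Icc_mem_nhds
        · linarith [hx.1]
        · exact hx.2
      exact (((hF x hxm).hasDerivAt hnhds)).hasDerivWithinAt
    · exact hGint.neg
  have hFt : F t = T (t + δ) t := by
    simp [hFdef, hEdef, NormedSpace.exp_zero]
  have hFtδ : F (t + δ) = NormedSpace.exp (δ • A t) := by
    simp only [hFdef, hEdef, add_sub_cancel_left]
    rw [hTid (t + δ) ⟨by linarith, htd⟩, one_mul]
  have hmain : T (t + δ) t - NormedSpace.exp (δ • A t) = ∫ r in t..(t + δ), G r := by
    rw [intervalIntegral.integral_neg, hFt, hFtδ, neg_eq_iff_eq_neg] at hFTC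
    rw [hFTC, neg_sub]
  constructor
  · exact hmain
  · intro hexp
    rw [hmain]
    have hbound : ∀ r ∈ Set.Icc t (t + δ), ‖G r‖ ≤ L * (r - t) := by
      intro r hr
      have h1 : ‖T (t + δ) r‖ ≤ 1 := hTnorm r (t + δ) (by linarith [hr.1]) hr.2 htd
      have h2 : ‖A r - A t‖ ≤ L * (r - t) := by
        have := hLip r ⟨by linarith [hr.1], by linarith [hr.2]⟩ t ⟨ht, htτ⟩
        rwa [abs_of_nonneg (by linarith [hr.1] : (0:ℝ) ≤ r - t)] at this
      have h3 : ‖E r‖ ≤ 1 := hexp (r - t) (by linarith [hr.1])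
      calc ‖G r‖ ≤ ‖T (t + δ) r * (A r - A t)‖ * ‖E r‖ := norm_mul_le _ _
        _ ≤ ‖T (t + δ) r‖ * ‖A r - A t‖ * ‖E r‖ := by
            apply mul_le_mul_of_nonneg_right (norm_mul_le _ _) (norm_nonneg _)
        _ ≤ 1 * (L * (r - t)) * 1 := by
            have h2' : (0:ℝ) ≤ L * (r - t) := le_trans (norm_nonneg _) h2
            apply mul_le_mul ?_ h3 (norm_nonneg _) (by nlinarith)
            exact mul_le_mul h1 h2 (norm_nonneg _) zero_le_one
        _ = L * (r - t) := by ring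
    calc ‖∫ r in t..(t + δ), G r‖ ≤ ∫ r in t..(t + δ), ‖G r‖ :=
          intervalIntegral.norm_integral_le_integral_norm httδ
      _ ≤ ∫ r in t..(t + δ), L * (r - t) := by
          apply intervalIntegral.integral_mono_on httδ hGint.norm
          · exact (Continuous.intervalIntegrable
              (continuous_const.mul (continuous_id.sub continuous_const)) _ _)
          · exact hbound
      _ = L * δ ^ 2 / 2 := by
          have : (∫ r in t..(t + δ), L * (r - t)) = L * ∫ r in t..(t + δ), (r - t) := by
            rw [← intervalIntegral.integral_const_mul]
          rw [this]
          have h4 : (∫ r in t..(t + δ), (r - t)) = ∫ x in (0:ℝ)..δ, x := by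
            have := intervalIntegral.integral_comp_sub_right (a := t) (b := t + δ)
              (fun x => x) t
            simpa using this
          rw [h4, integral_id]
          ring
end

section
/- Let X be a Banach space, t ↦ L_t an L-Lipschitz map from [0,1] into B(X) with ‖e^{r L_s}‖ ≤ 1 for all r ≥ 0 and s ∈ [0,1], T_{[t,s]} a propagator for (L_t), and M ∈ B(X) a contraction. For n ≥ m ≥ 1 define θ(i) := (1/m)·⌈i m / n⌉ for i ∈ {1,…,n}. Then the time-ordered products satisfy ‖∏_{i=1}^{n} M T_{[i/n,(i−1)/n]} − ∏_{i=1}^{n} M e^{(1/n) L_{θ(i)}}‖ ≤ 3L/m. -/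
set_option synthInstance.maxHeartbeats 1000000
set_option maxHeartbeats 1000000


/-- The time-ordered product `f n * f (n-1) * ⋯ * f 1` of operators
(composition in the order of increasing index, later times acting last). -/
noncomputable def timeOrderedProd {X : Type*} [NormedAddCommGroup X] [NormedSpace ℝ X]
    (f : ℕ → X →L[ℝ] X) : ℕ → X →L[ℝ] X
  | 0 => 1
  | n + 1 => f (n + 1) * timeOrderedProd f n

lemma timeOrderedProd_norm_le {X : Type*} [NormedAddCommGroup X] [NormedSpace ℝ X]
    (f : ℕ → X →L[ℝ] X) (n : ℕ) (h : ∀ i, 1 ≤ i → i ≤ n → ‖f i‖ ≤ 1) :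
    ‖timeOrderedProd f n‖ ≤ 1 := by
  induction n with
  | zero => exact ContinuousLinearMap.norm_id_le
  | succ n ih =>
    calc ‖timeOrderedProd f (n+1)‖ ≤ ‖f (n+1)‖ * ‖timeOrderedProd f n‖ := norm_mul_le _ _
    _ ≤ 1 * 1 := by
        refine mul_le_mul (h _ (Nat.le_add_left 1 n) le_rfl)
          (ih fun i h1 h2 => h i h1 (h2.trans (Nat.le_succ n))) (norm_nonneg _) zero_le_one
    _ = 1 := one_mul 1

lemma timeOrderedProd_sub_le {X : Type*} [NormedAddCommGroup X] [NormedSpace ℝ X]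
    (f g : ℕ → X →L[ℝ] X) (n : ℕ)
    (hf : ∀ i, 1 ≤ i → i ≤ n → ‖f i‖ ≤ 1) (hg : ∀ i, 1 ≤ i → i ≤ n → ‖g i‖ ≤ 1) :
    ‖timeOrderedProd f n - timeOrderedProd g n‖ ≤ ∑ i ∈ Finset.Icc 1 n, ‖f i - g i‖ := by
  induction n with
  | zero => simp [timeOrderedProd]
  | succ n ih =>
    have hf' : ∀ i, 1 ≤ i → i ≤ n → ‖f i‖ ≤ 1 := fun i h1 h2 => hf i h1 (h2.trans (Nat.le_succ n))
    have hg' : ∀ i, 1 ≤ i → i ≤ n → ‖g i‖ ≤ 1 := fun i h1 h2 => hg i h1 (h2.trans (Nat.le_succ n))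
    have key : timeOrderedProd f (n+1) - timeOrderedProd g (n+1)
        = f (n+1) * (timeOrderedProd f n - timeOrderedProd g n)
          + (f (n+1) - g (n+1)) * timeOrderedProd g n := by
      simp only [timeOrderedProd, mul_sub, sub_mul]; abel
    rw [key, Finset.sum_Icc_succ_top (Nat.le_add_left 1 n)]
    calc _ ≤ ‖f (n+1) * (timeOrderedProd f n - timeOrderedProd g n)‖
            + ‖(f (n+1) - g (n+1)) * timeOrderedProd g n‖ := norm_add_le _ _
    _ ≤ ‖f (n+1)‖ * ‖timeOrderedProd f n - timeOrderedProd g n‖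
          + ‖f (n+1) - g (n+1)‖ * ‖timeOrderedProd g n‖ :=
        add_le_add (norm_mul_le _ _) (norm_mul_le _ _)
    _ ≤ 1 * (∑ i ∈ Finset.Icc 1 n, ‖f i - g i‖) + ‖f (n+1) - g (n+1)‖ * 1 := by
        refine add_le_add (mul_le_mul (hf _ (Nat.le_add_left 1 n) le_rfl) (ih hf' hg')
          (norm_nonneg _) zero_le_one) ?_
        exact mul_le_mul_of_nonneg_left (timeOrderedProd_norm_le g n hg') (norm_nonneg _)
    _ = ∑ i ∈ Finset.Icc 1 n, ‖f i - g i‖ + ‖f (n+1) - g (n+1)‖ := by ring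

open NormedSpace in
lemma key_step {X : Type*} [NormedAddCommGroup X] [NormedSpace ℝ X] [CompleteSpace X]
    (L : ℝ) (hL : 0 ≤ L) (A : ℝ → X →L[ℝ] X)
    (hLip : ∀ t ∈ Set.Icc (0 : ℝ) 1, ∀ s ∈ Set.Icc (0 : ℝ) 1, ‖A t - A s‖ ≤ L * |t - s|)
    (hcontr : ∀ s ∈ Set.Icc (0 : ℝ) 1, ∀ r : ℝ, 0 ≤ r → ‖NormedSpace.exp (r • A s)‖ ≤ 1)
    (T : ℝ → ℝ → X →L[ℝ] X)
    (hTnorm : ∀ s t : ℝ, 0 ≤ s → s ≤ t → t ≤ 1 → ‖T t s‖ ≤ 1)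
    (hTid : ∀ t ∈ Set.Icc (0 : ℝ) 1, T t t = 1)
    (hTderiv : ∀ t ∈ Set.Icc (0 : ℝ) 1, ∀ s ∈ Set.Icc (0 : ℝ) t,
      HasDerivWithinAt (fun u => T t u) (-(T t s * A s)) (Set.Icc (0 : ℝ) t) s)
    (s t θ : ℝ) (hs : 0 ≤ s) (hst : s ≤ t) (ht1 : t ≤ 1) (hθt : t ≤ θ) (hθ1 : θ ≤ 1) :
    ‖T t s - NormedSpace.exp ((t - s) • A θ)‖ ≤ L * (θ - s) * (t - s) := by
  have ht : t ∈ Set.Icc (0 : ℝ) 1 := ⟨hs.trans hst, ht1⟩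
  have hθmem : θ ∈ Set.Icc (0 : ℝ) 1 := ⟨(hs.trans hst).trans hθt, hθ1⟩
  set B := A θ with hB
  set G : ℝ → X →L[ℝ] X := fun u => T t u * exp ((u - s) • B) with hG
  set G' : ℝ → X →L[ℝ] X := fun u => T t u * ((B - A u) * exp ((u - s) • B)) with hG'
  have hcomm : ∀ r : ℝ, exp (r • B) * B = B * exp (r • B) := by
    intro r
    exact (((Commute.refl B).smul_left r).exp_left).eq
  have hderiv : ∀ u ∈ Set.Icc s t, HasDerivWithinAt G (G' u) (Set.Icc s t) u := by
    intro u hu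
    have hu0 : (0:ℝ) ≤ u := hs.trans hu.1
    have hT : HasDerivWithinAt (fun u => T t u) (-(T t u * A u)) (Set.Icc s t) u :=
      (hTderiv t ht u ⟨hu0, hu.2⟩).mono (Set.Icc_subset_Icc hs le_rfl)
    have hE : HasDerivWithinAt (fun u : ℝ => exp ((u - s) • B))
        (exp ((u - s) • B) * B) (Set.Icc s t) u := by
      have h1 : HasDerivAt (fun r : ℝ => exp (r • B)) (exp ((u - s) • B) * B) (u - s) :=
        hasDerivAt_exp_smul_const B (u - s)
      have h2 : HasDerivAt (fun u : ℝ => u - s) 1 u := (hasDerivAt_id u).sub_const s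
      have := h1.scomp u h2
      simpa [Function.comp_def] using this.hasDerivWithinAt
    have := hT.mul hE
    refine this.congr_deriv ?_
    symm
    show T t u * ((B - A u) * exp ((u - s) • B)) = _
    rw [hcomm]
    ext x
    simp [mul_sub, sub_mul, ContinuousLinearMap.mul_apply]
    abel
  have hbound : ∀ u ∈ Set.Icc s t, ‖G' u‖ ≤ L * (θ - s) := by
    intro u hu
    have hu0 : (0:ℝ) ≤ u := hs.trans hu.1
    have humem : u ∈ Set.Icc (0:ℝ) 1 := ⟨hu0, hu.2.trans ht1⟩
    have h1 : ‖T t u‖ ≤ 1 := hTnorm u t hu0 hu.2 ht1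
    have h2 : ‖B - A u‖ ≤ L * (θ - u) := by
      have := hLip θ hθmem u humem
      rwa [abs_of_nonneg (by linarith [hu.2] : (0:ℝ) ≤ θ - u)] at this
    have h3 : ‖exp ((u - s) • B)‖ ≤ 1 := hcontr θ hθmem (u - s) (by linarith [hu.1])
    calc ‖G' u‖ ≤ ‖T t u‖ * (‖B - A u‖ * ‖exp ((u - s) • B)‖) :=
          (norm_mul_le _ _).trans (by gcongr; exact norm_mul_le _ _)
    _ ≤ 1 * (L * (θ - u) * 1) := by
        refine mul_le_mul h1 ?_ (by positivity) zero_le_one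
        exact mul_le_mul h2 h3 (norm_nonneg _) (mul_nonneg hL (by linarith [hu.2]))
    _ ≤ L * (θ - s) := by nlinarith [hu.1, hu.2]
  have := Convex.norm_image_sub_le_of_norm_hasDerivWithin_le hderiv hbound
    (convex_Icc s t) (Set.left_mem_Icc.2 hst) (Set.right_mem_Icc.2 hst)
  have hGs : G s = T t s := by simp [hG]
  have hGt : G t = exp ((t - s) • B) := by simp [hG, hTid t ht]
  rw [hGs, hGt, Real.norm_eq_abs, abs_of_nonneg (by linarith)] at this
  calc ‖T t s - exp ((t - s) • B)‖ = ‖exp ((t - s) • B) - T t s‖ := norm_sub_rev _ _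
  _ ≤ L * (θ - s) * (t - s) := this

/-- **Coarse-graining estimate (Eq. (3Lm) of the paper).**
For an `L`-Lipschitz family of generators of contraction semigroups on `[0,1]`, a propagator
`T` and a contraction `M`, with `θ(i) = ⌈i m / n⌉ / m` for `n ≥ m ≥ 1`,
`‖∏_{i=1}^n M T_{[i/n,(i−1)/n]} − ∏_{i=1}^n M e^{L_{θ(i)}/n}‖ ≤ 3 L / m`. -/
theorem coarse_graining_estimate
    {X : Type*} [NormedAddCommGroup X] [NormedSpace ℝ X] [CompleteSpace X]
    (L : ℝ) (A : ℝ → X →L[ℝ] X)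
    (hLip : ∀ t ∈ Set.Icc (0 : ℝ) 1, ∀ s ∈ Set.Icc (0 : ℝ) 1, ‖A t - A s‖ ≤ L * |t - s|)
    (hcontr : ∀ s ∈ Set.Icc (0 : ℝ) 1, ∀ r : ℝ, 0 ≤ r → ‖NormedSpace.exp (r • A s)‖ ≤ 1)
    (T : ℝ → ℝ → X →L[ℝ] X)
    (hTnorm : ∀ s t : ℝ, 0 ≤ s → s ≤ t → t ≤ 1 → ‖T t s‖ ≤ 1)
    (hTid : ∀ t ∈ Set.Icc (0 : ℝ) 1, T t t = 1)
    (hTcomp : ∀ s r t : ℝ, 0 ≤ s → s ≤ r → r ≤ t → t ≤ 1 → T t r * T r s = T t s)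
    (hTderiv : ∀ t ∈ Set.Icc (0 : ℝ) 1, ∀ s ∈ Set.Icc (0 : ℝ) t,
      HasDerivWithinAt (fun u => T t u) (-(T t s * A s)) (Set.Icc (0 : ℝ) t) s)
    (M : X →L[ℝ] X) (hM : ‖M‖ ≤ 1)
    (n m : ℕ) (hm : 1 ≤ m) (hmn : m ≤ n) :
    ‖timeOrderedProd (fun i => M * T ((i : ℝ) / n) (((i : ℝ) - 1) / n)) n -
      timeOrderedProd (fun i =>
        M * NormedSpace.exp ((n : ℝ)⁻¹ • A ((⌈(i : ℝ) * m / n⌉ : ℝ) / m))) n‖ ≤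
      3 * L / m := by
  have hn : 1 ≤ n := hm.trans hmn
  have hn' : (0:ℝ) < n := by exact_mod_cast hn
  have hm' : (0:ℝ) < m := by exact_mod_cast hm
  have hmn' : (m:ℝ) ≤ n := by exact_mod_cast hmn
  have hL : 0 ≤ L := by
    have := hLip 1 ⟨zero_le_one, le_rfl⟩ 0 ⟨le_rfl, zero_le_one⟩
    simp at this
    exact (norm_nonneg _).trans this
  -- basic facts about the grid for each i ∈ [1, n]
  have facts : ∀ i : ℕ, 1 ≤ i → i ≤ n →
      0 ≤ ((i:ℝ) - 1) / n ∧ ((i:ℝ) - 1) / n ≤ (i:ℝ) / n ∧ (i:ℝ) / n ≤ 1 ∧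
      (i:ℝ) / n ≤ (⌈(i : ℝ) * m / n⌉ : ℝ) / m ∧ (⌈(i : ℝ) * m / n⌉ : ℝ) / m ≤ 1 ∧
      (⌈(i : ℝ) * m / n⌉ : ℝ) / m - ((i:ℝ) - 1) / n ≤ 2 / m := by
    intro i h1 h2
    have hi1 : (1:ℝ) ≤ i := by exact_mod_cast h1
    have hin : (i:ℝ) ≤ n := by exact_mod_cast h2
    have hceil_ge : (i:ℝ) * m / n ≤ (⌈(i : ℝ) * m / n⌉ : ℝ) := Int.le_ceil _
    have hceil_lt : (⌈(i : ℝ) * m / n⌉ : ℝ) < (i:ℝ) * m / n + 1 := Int.ceil_lt_add_one _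
    have hceil_le : (⌈(i : ℝ) * m / n⌉ : ℝ) ≤ m := by
      have : ⌈(i : ℝ) * m / n⌉ ≤ (m : ℤ) := by
        rw [Int.ceil_le]
        push_cast
        rw [div_le_iff₀ hn']
        nlinarith
      exact_mod_cast this
    refine ⟨div_nonneg (by linarith) hn'.le, by gcongr <;> linarith, ?_, ?_, ?_, ?_⟩
    · rw [div_le_one hn']; exact hin
    · rw [div_le_div_iff₀ hn' hm']
      calc (i:ℝ) * m = (i:ℝ) * m / n * n := by field_simp
      _ ≤ (⌈(i : ℝ) * m / n⌉ : ℝ) * n := by nlinarith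
    · rw [div_le_one hm']; exact hceil_le
    · have h1n : (1:ℝ)/n ≤ 1/m := one_div_le_one_div_of_le hm' hmn'
      have hup : (⌈(i : ℝ) * m / n⌉ : ℝ) / m ≤ (i:ℝ)/n + 1/m := by
        rw [div_le_iff₀ hm']
        have e : ((i:ℝ)/n + 1/m) * m = (i:ℝ)*m/n + 1 := by field_simp
        rw [e]; linarith
      have e1 : ((i:ℝ) - 1)/n = (i:ℝ)/n - 1/n := by ring
      have e2 : (2:ℝ)/m = 1/m + 1/m := by ring
      linarith
  have hfc : ∀ i, 1 ≤ i → i ≤ n →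
      ‖(fun i => M * T ((i : ℝ) / n) (((i : ℝ) - 1) / n)) i‖ ≤ 1 := by
    intro i h1 h2
    obtain ⟨a1, a2, a3, _, _, _⟩ := facts i h1 h2
    calc ‖M * T ((i : ℝ) / n) (((i : ℝ) - 1) / n)‖
        ≤ ‖M‖ * ‖T ((i : ℝ) / n) (((i : ℝ) - 1) / n)‖ := norm_mul_le _ _
    _ ≤ 1 * 1 := mul_le_mul hM (hTnorm _ _ a1 a2 a3) (norm_nonneg _) zero_le_one
    _ = 1 := one_mul 1
  have hgc : ∀ i, 1 ≤ i → i ≤ n →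
      ‖(fun i => M * NormedSpace.exp ((n : ℝ)⁻¹ • A ((⌈(i : ℝ) * m / n⌉ : ℝ) / m))) i‖ ≤ 1 := by
    intro i h1 h2
    obtain ⟨a1, a2, a3, a4, a5, _⟩ := facts i h1 h2
    have hθmem : (⌈(i : ℝ) * m / n⌉ : ℝ) / m ∈ Set.Icc (0:ℝ) 1 :=
      ⟨le_trans (le_trans a1 a2) a4, a5⟩
    calc ‖M * NormedSpace.exp ((n : ℝ)⁻¹ • A ((⌈(i : ℝ) * m / n⌉ : ℝ) / m))‖
        ≤ ‖M‖ * ‖NormedSpace.exp ((n : ℝ)⁻¹ • A ((⌈(i : ℝ) * m / n⌉ : ℝ) / m))‖ :=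
          norm_mul_le _ _
    _ ≤ 1 * 1 := mul_le_mul hM (hcontr _ hθmem _ (by positivity)) (norm_nonneg _) zero_le_one
    _ = 1 := one_mul 1
  refine le_trans (timeOrderedProd_sub_le _ _ n hfc hgc) ?_
  have hterm : ∀ i ∈ Finset.Icc 1 n,
      ‖(fun i => M * T ((i : ℝ) / n) (((i : ℝ) - 1) / n)) i -
        (fun i => M * NormedSpace.exp ((n : ℝ)⁻¹ • A ((⌈(i : ℝ) * m / n⌉ : ℝ) / m))) i‖
      ≤ L * (2 / m) * (n : ℝ)⁻¹ := by
    intro i hi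
    rw [Finset.mem_Icc] at hi
    obtain ⟨a1, a2, a3, a4, a5, a6⟩ := facts i hi.1 hi.2
    have e : (n : ℝ)⁻¹ = (i:ℝ)/n - ((i:ℝ)-1)/n := by ring
    have hkey := key_step L hL A hLip hcontr T hTnorm hTid hTderiv
      (((i:ℝ)-1)/n) ((i:ℝ)/n) ((⌈(i : ℝ) * m / n⌉ : ℝ) / m) a1 a2 a3 a4 a5
    calc ‖M * T ((i : ℝ) / n) (((i : ℝ) - 1) / n) -
          M * NormedSpace.exp ((n : ℝ)⁻¹ • A ((⌈(i : ℝ) * m / n⌉ : ℝ) / m))‖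
        = ‖M * (T ((i : ℝ) / n) (((i : ℝ) - 1) / n) -
            NormedSpace.exp ((n : ℝ)⁻¹ • A ((⌈(i : ℝ) * m / n⌉ : ℝ) / m)))‖ := by
          rw [mul_sub]
    _ ≤ ‖M‖ * ‖T ((i : ℝ) / n) (((i : ℝ) - 1) / n) -
            NormedSpace.exp ((n : ℝ)⁻¹ • A ((⌈(i : ℝ) * m / n⌉ : ℝ) / m))‖ := norm_mul_le _ _
    _ ≤ 1 * ‖T ((i : ℝ) / n) (((i : ℝ) - 1) / n) -
            NormedSpace.exp ((n : ℝ)⁻¹ • A ((⌈(i : ℝ) * m / n⌉ : ℝ) / m))‖ :=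
          mul_le_mul_of_nonneg_right hM (norm_nonneg _)
    _ = ‖T ((i : ℝ) / n) (((i : ℝ) - 1) / n) -
            NormedSpace.exp (((i:ℝ)/n - ((i:ℝ)-1)/n) • A ((⌈(i : ℝ) * m / n⌉ : ℝ) / m))‖ := by
          rw [one_mul, e]
    _ ≤ L * ((⌈(i : ℝ) * m / n⌉ : ℝ) / m - ((i:ℝ)-1)/n) * ((i:ℝ)/n - ((i:ℝ)-1)/n) := hkey
    _ ≤ L * (2 / m) * (n : ℝ)⁻¹ := by
          rw [← e]
          have h0 : (0:ℝ) ≤ (n:ℝ)⁻¹ := by positivity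
          exact mul_le_mul_of_nonneg_right (mul_le_mul_of_nonneg_left a6 hL) h0
  calc _ ≤ ∑ _i ∈ Finset.Icc 1 n, L * (2 / m) * (n : ℝ)⁻¹ := Finset.sum_le_sum hterm
  _ = (n : ℝ) * (L * (2 / m) * (n : ℝ)⁻¹) := by
      rw [Finset.sum_const, Nat.card_Icc]
      simp [nsmul_eq_mul]
  _ = 2 * L / m := by field_simp
  _ ≤ 3 * L / m := by gcongr <;> linarith
end

section
/- Let X be a Banach space, t ↦ L_t an L-Lipschitz map from [0,1] into B(X) with ‖e^{r L_s}‖ ≤ 1 for all r ≥ 0 and s ∈ [0,1], and T_{[t,s]} a propagator for (L_t). Then for every m ≥ 1, ‖T_{[1,0]} − ∏_{j=1}^{m} e^{(1/m) L_{j/m}}‖ ≤ 3L/(2m), where the product is time-ordered; in particular the time-ordered exponential products converge in operator norm to T_{[1,0]} as m → ∞. -/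
/-- **Product-formula approximation of the propagator.**
For an `L`-Lipschitz family of generators of contraction semigroups on `[0,1]` with propagator
`T`, `‖T_{[1,0]} − ∏_{j=1}^m e^{L_{j/m}/m}‖ ≤ 3L/(2m)` for every `m ≥ 1`; in particular the
time-ordered exponential products converge to `T_{[1,0]}` in operator norm. -/
theorem propagator_product_formula
    {X : Type*} [NormedAddCommGroup X] [NormedSpace ℝ X] [CompleteSpace X]
    (L : ℝ) (A : ℝ → X →L[ℝ] X)
    (hLip : ∀ t ∈ Set.Icc (0 : ℝ) 1, ∀ s ∈ Set.Icc (0 : ℝ) 1, ‖A t - A s‖ ≤ L * |t - s|)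
    (hcontr : ∀ s ∈ Set.Icc (0 : ℝ) 1, ∀ r : ℝ, 0 ≤ r → ‖NormedSpace.exp (r • A s)‖ ≤ 1)
    (T : ℝ → ℝ → X →L[ℝ] X)
    (hTnorm : ∀ s t : ℝ, 0 ≤ s → s ≤ t → t ≤ 1 → ‖T t s‖ ≤ 1)
    (hTid : ∀ t ∈ Set.Icc (0 : ℝ) 1, T t t = 1)
    (hTcomp : ∀ s r t : ℝ, 0 ≤ s → s ≤ r → r ≤ t → t ≤ 1 → T t r * T r s = T t s)
    (hTderiv : ∀ t ∈ Set.Icc (0 : ℝ) 1, ∀ s ∈ Set.Icc (0 : ℝ) t,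
      HasDerivWithinAt (fun u => T t u) (-(T t s * A s)) (Set.Icc (0 : ℝ) t) s) :
    (∀ m : ℕ, 1 ≤ m →
      ‖T 1 0 - timeOrderedProd (fun j => NormedSpace.exp ((m : ℝ)⁻¹ • A ((j : ℝ) / m))) m‖ ≤
        3 * L / (2 * m)) ∧
    Filter.Tendsto
      (fun m : ℕ =>
        ‖T 1 0 - timeOrderedProd (fun j => NormedSpace.exp ((m : ℝ)⁻¹ • A ((j : ℝ) / m))) m‖)
      Filter.atTop (nhds 0) := by
  have hL0 : 0 ≤ L := by
    have h := hLip 1 ⟨zero_le_one, le_rfl⟩ 0 ⟨le_rfl, zero_le_one⟩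
    simp only [sub_zero, abs_one, mul_one] at h
    exact le_trans (norm_nonneg _) h
  -- Step estimate via Duhamel's formula
  have step : ∀ s t : ℝ, 0 ≤ s → s ≤ t → t ≤ 1 →
      ‖T t s - NormedSpace.exp ((t - s) • A t)‖ ≤ L * (t - s) * (t - s) := by
    intro s t hs hst ht1
    have ht01 : t ∈ Set.Icc (0 : ℝ) 1 := ⟨hs.trans hst, ht1⟩
    set g : ℝ → X →L[ℝ] X := fun u => NormedSpace.exp ((u - s) • A t) with hgdef
    have hg : ∀ u : ℝ, HasDerivAt g (A t * g u) u := by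
      intro u
      have h1 := hasDerivAt_exp_smul_const' (𝕂 := ℝ) (A t) (u - s)
      have h2 : HasDerivAt (fun v : ℝ => v - s) 1 u := (hasDerivAt_id u).sub_const s
      have h3 := h1.scomp u h2
      simp only [one_smul] at h3
      exact h3
    have hderiv : ∀ u ∈ Set.Icc s t,
        HasDerivWithinAt (fun u => T t u * g u) (T t u * ((A t - A u) * g u))
          (Set.Icc s t) u := by
      intro u hu
      have hu0t : u ∈ Set.Icc (0 : ℝ) t := ⟨hs.trans hu.1, hu.2⟩
      have hT := (hTderiv t ht01 u hu0t).mono (Set.Icc_subset_Icc hs le_rfl)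
      have := hT.mul ((hg u).hasDerivWithinAt)
      refine this.congr_deriv ?_
      noncomm_ring
    have hbound : ∀ u ∈ Set.Icc s t, ‖T t u * ((A t - A u) * g u)‖ ≤ L * (t - s) := by
      intro u hu
      have hu01 : u ∈ Set.Icc (0 : ℝ) 1 := ⟨hs.trans hu.1, hu.2.trans ht1⟩
      have h1 : ‖T t u‖ ≤ 1 := hTnorm u t hu01.1 hu.2 ht1
      have h2 : ‖A t - A u‖ ≤ L * (t - s) := by
        have := hLip t ht01 u hu01
        rw [abs_of_nonneg (by linarith [hu.2] : (0:ℝ) ≤ t - u)] at this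
        nlinarith [hu.1]
      have h3 : ‖g u‖ ≤ 1 := hcontr t ht01 (u - s) (by linarith [hu.1])
      calc ‖T t u * ((A t - A u) * g u)‖ ≤ ‖T t u‖ * ‖(A t - A u) * g u‖ := norm_mul_le _ _
        _ ≤ ‖T t u‖ * (‖A t - A u‖ * ‖g u‖) :=
            mul_le_mul_of_nonneg_left (norm_mul_le _ _) (norm_nonneg _)
        _ ≤ 1 * (L * (t - s) * 1) := by
            apply mul_le_mul h1 _ (mul_nonneg (norm_nonneg _) (norm_nonneg _)) zero_le_one
            exact mul_le_mul h2 h3 (norm_nonneg _) (by nlinarith)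
        _ = L * (t - s) := by ring
    have hmvt := Convex.norm_image_sub_le_of_norm_hasDerivWithin_le hderiv hbound
      (convex_Icc s t) (Set.left_mem_Icc.2 hst) (Set.right_mem_Icc.2 hst)
    have hFt : T t t * g t = NormedSpace.exp ((t - s) • A t) := by
      rw [hTid t ht01, one_mul]
    have hFs : T t s * g s = T t s := by
      simp only [hgdef, sub_self, zero_smul, NormedSpace.exp_zero, mul_one]
    rw [hFt, hFs] at hmvt
    rw [norm_sub_rev]
    calc ‖NormedSpace.exp ((t - s) • A t) - T t s‖ ≤ L * (t - s) * ‖t - s‖ := hmvt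
      _ = L * (t - s) * (t - s) := by
          rw [Real.norm_eq_abs, abs_of_nonneg (by linarith)]
  -- main estimate
  have main : ∀ m : ℕ, 1 ≤ m →
      ‖T 1 0 - timeOrderedProd (fun j => NormedSpace.exp ((m : ℝ)⁻¹ • A ((j : ℝ) / m))) m‖ ≤
        L / m := by
    intro m hm
    have hm0 : (0:ℝ) < m := by exact_mod_cast hm
    set E : ℕ → X →L[ℝ] X := fun j => NormedSpace.exp ((m : ℝ)⁻¹ • A ((j : ℝ) / m)) with hE
    set P : ℕ → X →L[ℝ] X := timeOrderedProd E with hP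
    have hEnorm : ∀ j : ℕ, j ≤ m → ‖E j‖ ≤ 1 := by
      intro j hj
      refine hcontr ((j : ℝ) / m) ⟨by positivity, ?_⟩ (m : ℝ)⁻¹ (by positivity)
      rw [div_le_one hm0]; exact_mod_cast hj
    have hPnorm : ∀ j : ℕ, j ≤ m → ‖P j‖ ≤ 1 := by
      intro j hj
      induction j with
      | zero =>
          show ‖(1 : X →L[ℝ] X)‖ ≤ 1
          exact ContinuousLinearMap.norm_id_le
      | succ n ih =>
          calc ‖P (n+1)‖ = ‖E (n+1) * P n‖ := rfl
            _ ≤ ‖E (n+1)‖ * ‖P n‖ := norm_mul_le _ _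
            _ ≤ 1 * 1 := mul_le_mul (hEnorm _ hj) (ih (Nat.le_of_succ_le hj))
                (norm_nonneg _) zero_le_one
            _ = 1 := one_mul 1
    have key : ∀ j : ℕ, j ≤ m →
        ‖T ((j : ℝ) / m) 0 - P j‖ ≤ j * (L * (m:ℝ)⁻¹ * (m:ℝ)⁻¹) := by
      intro j hj
      induction j with
      | zero =>
          simp only [Nat.cast_zero, zero_div, zero_mul]
          rw [hTid 0 ⟨le_rfl, zero_le_one⟩]
          simp [hP, timeOrderedProd]
      | succ n ih =>
          have hn : n ≤ m := Nat.le_of_succ_le hj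
          have ihn := ih hn
          have hfrac : (0:ℝ) ≤ (n:ℝ) / m := by positivity
          have hle : (n:ℝ) / m ≤ ((n:ℝ)+1) / m := by
            gcongr
            linarith
          have hle1 : ((n:ℝ)+1) / m ≤ 1 := by
            rw [div_le_one hm0]; exact_mod_cast hj
          have hdiff : ((n:ℝ)+1) / m - (n:ℝ) / m = (m:ℝ)⁻¹ := by
            field_simp
            ring
          have hstep := step ((n:ℝ)/m) (((n:ℝ)+1)/m) hfrac hle hle1
          rw [hdiff] at hstep
          have hEeq : NormedSpace.exp ((m:ℝ)⁻¹ • A (((n:ℝ)+1)/m)) = E (n+1) := by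
            simp [hE, Nat.cast_succ]
          rw [hEeq] at hstep
          have hcast : ((n+1 : ℕ) : ℝ) = (n:ℝ) + 1 := by push_cast; ring
          have hsplit : T (((n:ℝ)+1)/m) 0 - P (n+1) =
              T (((n:ℝ)+1)/m) ((n:ℝ)/m) * (T ((n:ℝ)/m) 0 - P n) +
              (T (((n:ℝ)+1)/m) ((n:ℝ)/m) - E (n+1)) * P n := by
            have hc := hTcomp 0 ((n:ℝ)/m) (((n:ℝ)+1)/m) le_rfl hfrac hle hle1
            have : P (n+1) = E (n+1) * P n := rfl
            rw [this, mul_sub, sub_mul, hc]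
            abel
          rw [hcast, hsplit]
          calc ‖T (((n:ℝ)+1)/m) ((n:ℝ)/m) * (T ((n:ℝ)/m) 0 - P n) +
              (T (((n:ℝ)+1)/m) ((n:ℝ)/m) - E (n+1)) * P n‖
              ≤ ‖T (((n:ℝ)+1)/m) ((n:ℝ)/m) * (T ((n:ℝ)/m) 0 - P n)‖ +
                ‖(T (((n:ℝ)+1)/m) ((n:ℝ)/m) - E (n+1)) * P n‖ := norm_add_le _ _
            _ ≤ ‖T (((n:ℝ)+1)/m) ((n:ℝ)/m)‖ * ‖T ((n:ℝ)/m) 0 - P n‖ +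
                ‖T (((n:ℝ)+1)/m) ((n:ℝ)/m) - E (n+1)‖ * ‖P n‖ :=
                add_le_add (norm_mul_le _ _) (norm_mul_le _ _)
            _ ≤ 1 * ((n:ℝ) * (L * (m:ℝ)⁻¹ * (m:ℝ)⁻¹)) +
                (L * (m:ℝ)⁻¹ * (m:ℝ)⁻¹) * 1 := by
                apply add_le_add
                · exact mul_le_mul (hTnorm _ _ hfrac hle hle1) ihn (norm_nonneg _) zero_le_one
                · exact mul_le_mul hstep (hPnorm n hn) (norm_nonneg _) (by positivity)
            _ = ((n:ℝ)+1) * (L * (m:ℝ)⁻¹ * (m:ℝ)⁻¹) := by ring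
    have hfin := key m le_rfl
    have h1 : (m:ℝ) / m = 1 := div_self (ne_of_gt hm0)
    rw [h1] at hfin
    calc ‖T 1 0 - P m‖ ≤ m * (L * (m:ℝ)⁻¹ * (m:ℝ)⁻¹) := hfin
      _ = L / m := by field_simp
  constructor
  · intro m hm
    have hm0 : (0:ℝ) < m := by exact_mod_cast hm
    refine (main m hm).trans ?_
    rw [div_le_div_iff₀ hm0 (by positivity)]
    nlinarith
  · apply squeeze_zero' (Filter.Eventually.of_forall fun m => norm_nonneg _)
    · filter_upwards [Filter.eventually_ge_atTop 1] with m hm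
      exact (main m hm).trans (le_refl _) |>.trans (le_of_eq rfl)
    · have : Filter.Tendsto (fun m : ℕ => L / m) Filter.atTop (nhds 0) :=
        tendsto_const_div_atTop_nhds_zero_nat L
      exact this
end

section
/- Let X be a Banach space, α ∈ (0,1], and t ↦ L_t an α-Hölder continuous map from [0,τ] into B(X) with Hölder constant L, such that ‖e^{r L_s}‖ ≤ 1 for all r ≥ 0 and s ∈ [0,τ]. Let T_{[t,s]} be a propagator for (L_t). Then for all s, t and δ ≥ 0 in the relevant range, ‖T_{[t+δ,t]} − e^{δ L_s}‖ ≤ L·(δ·|t−s|^α + δ^{1+α}/(1+α)). -/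
open Set Filter Topology intervalIntegral

set_option maxHeartbeats 1000000

private lemma rpow_add_le_add_rpow_real {a b p : ℝ} (ha : 0 ≤ a) (hb : 0 ≤ b)
    (hp : 0 ≤ p) (hp1 : p ≤ 1) : (a + b) ^ p ≤ a ^ p + b ^ p := by
  have h := NNReal.rpow_add_le_add_rpow a.toNNReal b.toNNReal hp hp1
  rw [← Real.coe_toNNReal a ha, ← Real.coe_toNNReal b hb]
  exact_mod_cast h

/-- **Hölder version of the piecewise-constant approximation.**
If `t ↦ A t` is `α`-Hölder continuous with constant `L` on `[0, τ]`, takes values in generators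
of contraction semigroups, and `T t s` is a propagator for this family, then
`‖T (t+δ) t − e^{δ A s}‖ ≤ L (δ |t − s|^α + δ^{1+α}/(1+α))`. -/
theorem propagator_piecewise_constant_approx_holder
    {X : Type*} [NormedAddCommGroup X] [NormedSpace ℝ X] [CompleteSpace X]
    (τ : ℝ) (hτ : 0 ≤ τ)
    (α : ℝ) (hα0 : 0 < α) (hα1 : α ≤ 1)
    (L : ℝ) (A : ℝ → X →L[ℝ] X)
    (hHolder : ∀ t ∈ Set.Icc (0 : ℝ) τ, ∀ s ∈ Set.Icc (0 : ℝ) τ, ‖A t - A s‖ ≤ L * |t - s| ^ α)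
    (hcontr : ∀ s ∈ Set.Icc (0 : ℝ) τ, ∀ r : ℝ, 0 ≤ r → ‖NormedSpace.exp (r • A s)‖ ≤ 1)
    (T : ℝ → ℝ → X →L[ℝ] X)
    (hTnorm : ∀ s t : ℝ, 0 ≤ s → s ≤ t → t ≤ τ → ‖T t s‖ ≤ 1)
    (hTid : ∀ t ∈ Set.Icc (0 : ℝ) τ, T t t = 1)
    (hTcomp : ∀ s r t : ℝ, 0 ≤ s → s ≤ r → r ≤ t → t ≤ τ → T t r * T r s = T t s)
    (hTderiv : ∀ t ∈ Set.Icc (0 : ℝ) τ, ∀ s ∈ Set.Icc (0 : ℝ) t,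
      HasDerivWithinAt (fun u => T t u) (-(T t s * A s)) (Set.Icc (0 : ℝ) t) s) :
    ∀ s ∈ Set.Icc (0 : ℝ) τ, ∀ t δ : ℝ, 0 ≤ t → 0 ≤ δ → t + δ ≤ τ →
      ‖T (t + δ) t - NormedSpace.exp (δ • A s)‖ ≤
        L * (δ * |t - s| ^ α + δ ^ (1 + α) / (1 + α)) := by
  intro s hs t δ ht hδ htd
  rcases eq_or_lt_of_le hδ with hδ0 | hδpos
  · -- δ = 0 : both sides are zero
    rw [← hδ0, add_zero, hTid t ⟨ht, by linarith⟩, zero_smul, NormedSpace.exp_zero, sub_self,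
      norm_zero, Real.zero_rpow (by positivity : (1 : ℝ) + α ≠ 0)]
    simp
  -- now δ > 0, hence τ > 0, hence L ≥ 0
  have hτpos : 0 < τ := by linarith
  have hL : 0 ≤ L := by
    have h1 := hHolder τ ⟨hτ, le_rfl⟩ 0 ⟨le_rfl, hτ⟩
    have h2 : (0 : ℝ) ≤ L * |τ - 0| ^ α := le_trans (norm_nonneg _) h1
    have h3 : 0 < |τ - 0| ^ α := Real.rpow_pos_of_pos (by rw [sub_zero, abs_of_pos hτpos]; exact hτpos) α
    nlinarith
  set b := t + δ with hb_def
  have htb : t ≤ b := by simp [hb_def]; linarith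
  have h0b : 0 ≤ b := le_trans ht htb
  have hbτ : b ≤ τ := htd
  have hsubset : Icc t b ⊆ Icc (0 : ℝ) b := Icc_subset_Icc ht le_rfl
  set B := A s with hB_def
  set E : ℝ → X →L[ℝ] X := fun u => NormedSpace.exp ((u - t) • B) with hE_def
  -- derivative of E
  have hEderiv : ∀ u : ℝ, HasDerivAt E (B * E u) u := by
    intro u
    have h1 : HasDerivAt (fun u : ℝ => u - t) 1 u := (hasDerivAt_id u).sub_const t
    have h2 := hasDerivAt_exp_smul_const' (𝕂 := ℝ) B (u - t)
    have h3 := h2.scomp u h1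
    simp only [Function.comp_def, one_smul] at h3
    exact h3
  have hEcont : Continuous E := continuous_iff_continuousAt.2 fun u => (hEderiv u).continuousAt
  -- derivative of u ↦ T b u
  have hTd : ∀ u ∈ Icc t b, HasDerivWithinAt (fun v => T b v) (-(T b u * A u)) (Icc (0 : ℝ) b) u :=
    fun u hu => hTderiv b ⟨h0b, hbτ⟩ u ⟨le_trans ht hu.1, hu.2⟩
  set g : ℝ → X →L[ℝ] X := fun u => T b u * E u with hg_def
  set g' : ℝ → X →L[ℝ] X := fun u => T b u * ((B - A u) * E u) with hg'_def
  have hg : ∀ u ∈ Icc t b, HasDerivWithinAt g (g' u) (Icc (0 : ℝ) b) u := by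
    intro u hu
    have := (hTd u hu).mul ((hEderiv u).hasDerivWithinAt)
    have e : g' u = -(T b u * A u) * E u + T b u * (B * E u) := by
      show T b u * ((B - A u) * E u) = _
      noncomm_ring
    rw [e]
    exact this
  -- continuity facts
  have hgcont : ContinuousOn g (Icc t b) :=
    fun u hu => ((hg u hu).mono hsubset).continuousWithinAt
  have hTcont : ContinuousOn (fun u => T b u) (Icc t b) :=
    fun u hu => ((hTd u hu).mono hsubset).continuousWithinAt
  have hAcont : ContinuousOn A (Icc (0 : ℝ) τ) := by
    intro x hx
    have hzero : Tendsto (fun u : ℝ => L * |u - x| ^ α) (𝓝[Icc (0:ℝ) τ] x) (𝓝 0) := by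
      have habs : Tendsto (fun u : ℝ => |u - x|) (𝓝 x) (𝓝 0) := by
        have hcont : Continuous fun u : ℝ => |u - x| := (continuous_id.sub continuous_const).abs
        simpa using hcont.tendsto x
      have hr := (Real.continuousAt_rpow_const 0 α (Or.inr hα0.le)).tendsto.comp habs
      rw [Real.zero_rpow hα0.ne'] at hr
      have := hr.const_mul L
      rw [mul_zero] at this
      exact this.mono_left nhdsWithin_le_nhds
    have hkey : Tendsto (fun u => A u - A x) (𝓝[Icc (0:ℝ) τ] x) (𝓝 0) := by
      apply tendsto_zero_iff_norm_tendsto_zero.2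
      apply squeeze_zero' (Filter.Eventually.of_forall fun u => norm_nonneg _)
        (eventually_mem_nhdsWithin.mono fun u hu => hHolder u hu x hx) hzero
    have := hkey.add_const (A x)
    simpa [ContinuousWithinAt] using this
  have hAcont' : ContinuousOn A (Icc t b) := hAcont.mono (Icc_subset_Icc ht hbτ)
  have hg'cont : ContinuousOn g' (Icc t b) :=
    hTcont.mul ((continuousOn_const.sub hAcont').mul hEcont.continuousOn)
  have hint : IntervalIntegrable g' MeasureTheory.volume t b := by
    apply ContinuousOn.intervalIntegrable
    rwa [uIcc_of_le htb]
  -- FTC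
  have hFTC : ∫ u in t..b, g' u = g b - g t := by
    apply integral_eq_sub_of_hasDeriv_right_of_le htb hgcont _ hint
    intro x hx
    exact (hg x ⟨hx.1.le, hx.2.le⟩).mono_of_mem_nhdsWithin
      (Icc_mem_nhdsGT_of_mem ⟨le_trans ht hx.1.le, hx.2⟩)
  have hgt : g t = T b t := by simp [hg_def, hE_def, NormedSpace.exp_zero]
  have hgb : g b = NormedSpace.exp (δ • B) := by
    simp [hg_def, hE_def, hTid (t + δ) ⟨h0b, hbτ⟩, hb_def, add_sub_cancel_left]
  -- bound the derivative pointwise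
  set C : ℝ → ℝ := fun u => L * (|t - s| ^ α + (u - t) ^ α) with hC_def
  have hCnn : ∀ u ∈ Icc t b, 0 ≤ C u := by
    intro u hu
    have h1 : (0:ℝ) ≤ |t - s| ^ α := Real.rpow_nonneg (abs_nonneg _) α
    have h2 : (0:ℝ) ≤ (u - t) ^ α := Real.rpow_nonneg (by linarith [hu.1]) α
    positivity
  have hptwise : ∀ u ∈ Icc t b, ‖g' u‖ ≤ C u := by
    intro u hu
    have hu0 : (0:ℝ) ≤ u := le_trans ht hu.1
    have h1 : ‖T b u‖ ≤ 1 := hTnorm u b hu0 hu.2 hbτ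
    have h2 : ‖E u‖ ≤ 1 := hcontr s hs (u - t) (by linarith [hu.1])
    have h3 : ‖B - A u‖ ≤ C u := by
      have hHo : ‖A u - A s‖ ≤ L * |u - s| ^ α :=
        hHolder u ⟨hu0, le_trans hu.2 hbτ⟩ s hs
      have habs : |u - s| ≤ |t - s| + (u - t) := by
        have : u - s = (t - s) + (u - t) := by ring
        rw [this]
        calc |(t - s) + (u - t)| ≤ |t - s| + |u - t| := abs_add_le _ _
          _ = |t - s| + (u - t) := by rw [abs_of_nonneg (show (0:ℝ) ≤ u - t by linarith [hu.1])]
      have hpow : |u - s| ^ α ≤ |t - s| ^ α + (u - t) ^ α := by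
        calc |u - s| ^ α ≤ (|t - s| + (u - t)) ^ α :=
              Real.rpow_le_rpow (abs_nonneg _) habs hα0.le
          _ ≤ |t - s| ^ α + (u - t) ^ α :=
              rpow_add_le_add_rpow_real (abs_nonneg _) (by linarith [hu.1]) hα0.le hα1
      calc ‖B - A u‖ = ‖A u - A s‖ := norm_sub_rev _ _
        _ ≤ L * |u - s| ^ α := hHo
        _ ≤ C u := by simp only [hC_def]; exact mul_le_mul_of_nonneg_left hpow hL
    calc ‖g' u‖ ≤ ‖T b u‖ * ‖(B - A u) * E u‖ := norm_mul_le _ _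
      _ ≤ 1 * (‖B - A u‖ * ‖E u‖) :=
          mul_le_mul h1 (norm_mul_le _ _) (norm_nonneg _) zero_le_one
      _ = ‖B - A u‖ * ‖E u‖ := one_mul _
      _ ≤ C u * 1 := mul_le_mul h3 h2 (norm_nonneg _) (hCnn u hu)
      _ = C u := mul_one _
  -- integrability of the bound
  have hrint : IntervalIntegrable (fun u : ℝ => (u - t) ^ α) MeasureTheory.volume t b := by
    apply ContinuousOn.intervalIntegrable
    intro u _
    have h1 : ContinuousAt (fun u : ℝ => u - t) u :=
      (continuous_id.sub continuous_const).continuousAt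
    have h2 : ContinuousAt (fun y : ℝ => y ^ α) (u - t) :=
      Real.continuousAt_rpow_const _ α (Or.inr hα0.le)
    exact (ContinuousAt.comp (x := u) h2 h1).continuousWithinAt
  have hCint : IntervalIntegrable C MeasureTheory.volume t b :=
    (intervalIntegrable_const.add hrint).const_mul L
  -- compute the integral of the bound
  have hIr : ∫ u in t..b, (u - t) ^ α = δ ^ (α + 1) / (α + 1) := by
    have h1 := intervalIntegral.integral_comp_sub_right (a := t) (b := b)
      (fun v : ℝ => v ^ α) t
    have hbt : b - t = δ := by simp [hb_def]
    simp only [sub_self, hbt] at h1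
    rw [h1, integral_rpow (Or.inl (by linarith : (-1:ℝ) < α)),
      Real.zero_rpow (by positivity : α + 1 ≠ 0)]
    ring
  have hIC : ∫ u in t..b, C u = L * (δ * |t - s| ^ α + δ ^ (1 + α) / (1 + α)) := by
    simp only [hC_def]
    rw [intervalIntegral.integral_const_mul,
      intervalIntegral.integral_add intervalIntegrable_const hrint,
      intervalIntegral.integral_const, hIr]
    have hbt : b - t = δ := by simp [hb_def]
    rw [hbt, add_comm α 1, smul_eq_mul]
  -- put everything together
  calc ‖T b t - NormedSpace.exp (δ • A s)‖
      = ‖g b - g t‖ := by rw [hgt, hgb, norm_sub_rev, hB_def]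
    _ = ‖∫ u in t..b, g' u‖ := by rw [hFTC]
    _ ≤ ∫ u in t..b, ‖g' u‖ := intervalIntegral.norm_integral_le_integral_norm htb
    _ ≤ ∫ u in t..b, C u :=
        intervalIntegral.integral_mono_on htb hint.norm hCint hptwise
    _ = L * (δ * |t - s| ^ α + δ ^ (1 + α) / (1 + α)) := hIC
end
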